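/- arXiv:2004.05833 — 2 statements merged into one kernel-verified Lean document; each statement's English description precedes it below -/
import Mathlib

section
/- Recursive log-Sobolev estimate: let κ = (κ_1,…,κ_L) with L ≥ 2. Suppose that for each ℓ ∈ [L], τ_ℓ ≥ 0 is a valid log-Sobolev constant for the multislice Ω_{κ^{∖ℓ}} (i.e. Ent(g) ≤ τ_ℓ·𝔈(√g,√g) for all g : Ω_{κ^{∖ℓ}} → [0,∞)), and σ_ℓ ≥ 0 is a valid log-Sobolev constant for the two-color multislice with parameter (κ_ℓ, n−κ_ℓ). Then for every f : Ω_κ → [0,∞), (L−1)·Ent_κ(f) ≤ [ (L−2)·max_{ℓ∈[L]} τ_ℓ + max_{ℓ∈[L]} 2(1−κ_ℓ/n)·σ_ℓ ]·𝔈_κ(√f,√f). -/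
open Finset

namespace Multislice

/-- The multislice `Ω_κ`: sequences of length `n` with values in `Fin L`
in which color `ℓ` appears exactly `κ ℓ` times. -/
def slice (L n : ℕ) (κ : Fin L → ℕ) : Finset (Fin n → Fin L) :=
  Finset.univ.filter fun ω => ∀ ℓ, (Finset.univ.filter fun i => ω i = ℓ).card = κ ℓ

/-- Average of `f` with respect to the uniform distribution on `Ω`. -/
noncomputable def expect {L n : ℕ} (Ω : Finset (Fin n → Fin L))
    (f : (Fin n → Fin L) → ℝ) : ℝ :=
  (∑ ω ∈ Ω, f ω) / Ω.card

/-- Discrete gradient `(∇^{ij} f)(ω) = f(ω^{ij}) - f(ω)`. -/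
noncomputable def grad {L n : ℕ} (i j : Fin n) (f : (Fin n → Fin L) → ℝ)
    (ω : Fin n → Fin L) : ℝ :=
  f (ω ∘ Equiv.swap i j) - f ω

/-- The Dirichlet form `𝔈_κ(f,g) = (1/(2n)) Σ_{i<j} E[(∇^{ij}f)(∇^{ij}g)]`. -/
noncomputable def dirichlet {L n : ℕ} (Ω : Finset (Fin n → Fin L))
    (f g : (Fin n → Fin L) → ℝ) : ℝ :=
  (1 / (2 * (n : ℝ))) *
    ∑ p ∈ Finset.univ.filter (fun p : Fin n × Fin n => p.1 < p.2),
      expect Ω fun ω => grad p.1 p.2 f ω * grad p.1 p.2 g ω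

/-- The weighted Dirichlet form `𝔈^G_κ(f,g) = (1/2) Σ_{i<j} G_{ij} E[(∇^{ij}f)(∇^{ij}g)]`. -/
noncomputable def wDirichlet {L n : ℕ} (G : Fin n → Fin n → ℝ)
    (Ω : Finset (Fin n → Fin L)) (f g : (Fin n → Fin L) → ℝ) : ℝ :=
  (1 / 2) *
    ∑ p ∈ Finset.univ.filter (fun p : Fin n × Fin n => p.1 < p.2),
      G p.1 p.2 * expect Ω fun ω => grad p.1 p.2 f ω * grad p.1 p.2 g ω

/-- Entropy `Ent(f) = E[f log f] - E[f] log E[f]` (note `Real.log 0 = 0`). -/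
noncomputable def entropy {L n : ℕ} (Ω : Finset (Fin n → Fin L))
    (f : (Fin n → Fin L) → ℝ) : ℝ :=
  expect Ω (fun ω => f ω * Real.log (f ω)) - expect Ω f * Real.log (expect Ω f)

/-- Variance `Var(f) = E[f²] - (E[f])²`. -/
noncomputable def variance {L n : ℕ} (Ω : Finset (Fin n → Fin L))
    (f : (Fin n → Fin L) → ℝ) : ℝ :=
  expect Ω (fun ω => f ω ^ 2) - (expect Ω f) ^ 2

/-- The edge boundary `∂A` of `A ⊆ Ω`: edges (recorded as pairs with first endpoint
in `A` and second endpoint in `Ω \ A`) between `A` and its complement, where two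
states are adjacent when they differ in exactly two coordinates. -/
def edgeBoundary {L n : ℕ} (Ω A : Finset (Fin n → Fin L)) :
    Finset ((Fin n → Fin L) × (Fin n → Fin L)) :=
  (A ×ˢ (Ω \ A)).filter fun p => (Finset.univ.filter fun i => p.1 i ≠ p.2 i).card = 2

/-- The `ℓ`-colored region `ξ_ℓ(ω) = {i : ω i = ℓ}`. -/
def xi {L n : ℕ} (ℓ : Fin L) (ω : Fin n → Fin L) : Finset (Fin n) :=
  Finset.univ.filter fun i => ω i = ℓ

/-- The parameter `κ^{∖ℓ}` obtained from `κ` by removing the `ℓ`-th entry. -/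
def removeIdx {L : ℕ} (κ : Fin L → ℕ) (ℓ : Fin L) (m : Fin (L - 1)) : ℕ :=
  if (m : ℕ) < (ℓ : ℕ) then κ ⟨m, by have := m.isLt; omega⟩
  else κ ⟨(m : ℕ) + 1, by have := m.isLt; omega⟩

/- ### generic expectation lemmas -/

lemma expect_nonneg {L n : ℕ} {Ω : Finset (Fin n → Fin L)} {f : (Fin n → Fin L) → ℝ}
    (h : ∀ ω ∈ Ω, 0 ≤ f ω) : 0 ≤ expect Ω f :=
  div_nonneg (Finset.sum_nonneg h) (Nat.cast_nonneg _)

lemma expect_congr {L n : ℕ} {Ω : Finset (Fin n → Fin L)} {f g : (Fin n → Fin L) → ℝ}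
    (h : ∀ ω ∈ Ω, f ω = g ω) : expect Ω f = expect Ω g := by
  unfold expect; rw [Finset.sum_congr rfl h]

lemma expect_le {L n : ℕ} {Ω : Finset (Fin n → Fin L)} {f g : (Fin n → Fin L) → ℝ}
    (h : ∀ ω ∈ Ω, f ω ≤ g ω) : expect Ω f ≤ expect Ω g := by
  unfold expect
  gcongr with ω hω
  exact h ω hω

lemma expect_add {L n : ℕ} (Ω : Finset (Fin n → Fin L)) (f g : (Fin n → Fin L) → ℝ) :
    expect Ω (fun ω => f ω + g ω) = expect Ω f + expect Ω g := by
  unfold expect; rw [Finset.sum_add_distrib, add_div]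

lemma expect_sub {L n : ℕ} (Ω : Finset (Fin n → Fin L)) (f g : (Fin n → Fin L) → ℝ) :
    expect Ω (fun ω => f ω - g ω) = expect Ω f - expect Ω g := by
  unfold expect; rw [Finset.sum_sub_distrib, sub_div]

lemma expect_smul {L n : ℕ} (Ω : Finset (Fin n → Fin L)) (c : ℝ) (f : (Fin n → Fin L) → ℝ) :
    expect Ω (fun ω => c * f ω) = c * expect Ω f := by
  unfold expect; rw [← Finset.mul_sum, mul_div_assoc]

lemma expect_zero {L n : ℕ} (Ω : Finset (Fin n → Fin L)) :
    expect Ω (fun _ => (0:ℝ)) = 0 := by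
  unfold expect; simp

lemma expect_sum {L n : ℕ} {α : Type*} (Ω : Finset (Fin n → Fin L)) (s : Finset α)
    (f : α → (Fin n → Fin L) → ℝ) :
    expect Ω (fun ω => ∑ a ∈ s, f a ω) = ∑ a ∈ s, expect Ω (f a) := by
  unfold expect; rw [Finset.sum_comm, Finset.sum_div]

/-- Transport of expectation along a bijection between two sample spaces. -/
lemma expect_map {L n L' n' : ℕ} {Ω : Finset (Fin n → Fin L)} {Ω' : Finset (Fin n' → Fin L')}
    {e : (Fin n → Fin L) → (Fin n' → Fin L')}
    (h1 : ∀ ω ∈ Ω, e ω ∈ Ω') (h2 : ∀ ω ∈ Ω, ∀ ω₂ ∈ Ω, e ω = e ω₂ → ω = ω₂)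
    (h3 : ∀ ω' ∈ Ω', ∃ ω, ∃ _ : ω ∈ Ω, e ω = ω') (f : (Fin n' → Fin L') → ℝ) :
    expect Ω' f = expect Ω (fun ω => f (e ω)) := by
  unfold expect
  rw [Finset.sum_bij (fun ω _ => e ω) h1 h2 h3 (fun ω _ => rfl),
    Finset.card_bij (fun ω _ => e ω) h1 h2 h3]

lemma entropy_map {L n L' n' : ℕ} {Ω : Finset (Fin n → Fin L)} {Ω' : Finset (Fin n' → Fin L')}
    {e : (Fin n → Fin L) → (Fin n' → Fin L')}
    (h1 : ∀ ω ∈ Ω, e ω ∈ Ω') (h2 : ∀ ω ∈ Ω, ∀ ω₂ ∈ Ω, e ω = e ω₂ → ω = ω₂)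
    (h3 : ∀ ω' ∈ Ω', ∃ ω, ∃ _ : ω ∈ Ω, e ω = ω') (f : (Fin n' → Fin L') → ℝ) :
    entropy Ω' f = entropy Ω (fun ω => f (e ω)) := by
  unfold entropy
  rw [expect_map h1 h2 h3, expect_map h1 h2 h3]


/- ### tower property and chain rule for entropy, over a fibering with equal fiber sizes -/

section Chain
variable {L n L₂ n₂ : ℕ} (Ω : Finset (Fin n → Fin L)) (Ω₂ : Finset (Fin n₂ → Fin L₂))
  (π : (Fin n → Fin L) → (Fin n₂ → Fin L₂))

lemma card_eq_sum_fibers (hmaps : ∀ ω ∈ Ω, π ω ∈ Ω₂) :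
    Ω.card = ∑ x ∈ Ω₂, (Ω.filter fun ω => π ω = x).card := by
  rw [Finset.card_eq_sum_ones, ← Finset.sum_fiberwise_of_maps_to hmaps (fun _ => (1:ℕ))]
  exact Finset.sum_congr rfl fun x _ => (Finset.card_eq_sum_ones _).symm

lemma expect_tower (hmaps : ∀ ω ∈ Ω, π ω ∈ Ω₂) {M : ℕ} (hM : 0 < M)
    (hfib : ∀ x ∈ Ω₂, (Ω.filter fun ω => π ω = x).card = M) (h2 : Ω₂.Nonempty)
    (f : (Fin n → Fin L) → ℝ) :
    expect Ω f = expect Ω₂ (fun x => expect (Ω.filter fun ω => π ω = x) f) := by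
  have hcard : Ω.card = Ω₂.card * M := by
    rw [card_eq_sum_fibers Ω Ω₂ π hmaps, Finset.sum_congr rfl hfib, Finset.sum_const, smul_eq_mul]
  have h2c : (0:ℝ) < Ω₂.card := by exact_mod_cast h2.card_pos
  have hMc : (0:ℝ) < M := by exact_mod_cast hM
  unfold expect
  rw [← Finset.sum_fiberwise_of_maps_to hmaps f, hcard]
  have hrw : ∀ x ∈ Ω₂,
      (∑ ω ∈ Ω.filter (fun ω => π ω = x), f ω) / (((Ω.filter (fun ω => π ω = x)).card : ℕ) : ℝ)
        = (∑ ω ∈ Ω.filter (fun ω => π ω = x), f ω) / (M : ℝ) := by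
    intro x hx; rw [hfib x hx]
  rw [Finset.sum_congr rfl hrw, Finset.sum_div, Finset.sum_div]
  push_cast
  refine Finset.sum_congr rfl fun x hx => ?_
  ring

lemma entropy_chain (hmaps : ∀ ω ∈ Ω, π ω ∈ Ω₂) {M : ℕ} (hM : 0 < M)
    (hfib : ∀ x ∈ Ω₂, (Ω.filter fun ω => π ω = x).card = M) (h2 : Ω₂.Nonempty)
    (f : (Fin n → Fin L) → ℝ) :
    entropy Ω f = expect Ω₂ (fun x => entropy (Ω.filter fun ω => π ω = x) f)
      + entropy Ω₂ (fun x => expect (Ω.filter fun ω => π ω = x) f) := by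
  unfold entropy
  rw [expect_tower Ω Ω₂ π hmaps hM hfib h2 f,
    expect_tower Ω Ω₂ π hmaps hM hfib h2 (fun ω => f ω * Real.log (f ω)), expect_sub]
  beta_reduce
  ring

end Chain


/- ### nonemptiness of slices -/

lemma card_interval_fin (k a b : ℕ) (hab : a ≤ b) (hbk : b ≤ k) :
    (Finset.univ.filter fun i : Fin k => a ≤ (i:ℕ) ∧ (i:ℕ) < b).card = b - a := by
  rw [← Nat.card_Ico a b]
  apply Finset.card_bij (fun (i : Fin k) _ => (i:ℕ))
  · intro i hi
    simp only [Finset.mem_filter, Finset.mem_univ, true_and] at hi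
    simp [Finset.mem_Ico, hi.1, hi.2]
  · intro i hi j hj hij
    exact Fin.ext hij
  · intro m hm
    simp only [Finset.mem_Ico] at hm
    exact ⟨⟨m, lt_of_lt_of_le hm.2 hbk⟩, by simp [hm.1, hm.2], rfl⟩

lemma slice_nonempty (Λ k : ℕ) (κ' : Fin Λ → ℕ) (hsum : ∑ c, κ' c = k) :
    (slice Λ k κ').Nonempty := by
  rcases Nat.eq_zero_or_pos k with hk | hk
  · subst hk
    refine ⟨fun i => i.elim0, ?_⟩
    simp only [slice, Finset.mem_filter, Finset.mem_univ, true_and]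
    intro ℓ
    have : κ' ℓ = 0 := by
      have := Finset.sum_eq_zero_iff.mp hsum ℓ (Finset.mem_univ _)
      exact this
    rw [this]
    apply Finset.card_eq_zero.mpr
    apply Finset.eq_empty_of_forall_notMem
    intro i
    exact i.elim0
  · have hΛ : 0 < Λ := by
      by_contra h
      push_neg at h
      interval_cases Λ
      simp at hsum; omega
    set F : ℕ → ℕ := fun t => ∑ c ∈ Finset.univ.filter (fun c : Fin Λ => (c:ℕ) < t), κ' c with hF
    have hFmono : ∀ {t t'}, t ≤ t' → F t ≤ F t' := by
      intro t t' htt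
      apply Finset.sum_le_sum_of_subset
      intro c hc
      simp only [Finset.mem_filter, Finset.mem_univ, true_and] at hc ⊢
      omega
    have hFtop : F Λ = k := by
      rw [hF, ← hsum]
      apply Finset.sum_congr _ (fun _ _ => rfl)
      apply Finset.filter_true_of_mem
      intro c _
      exact c.isLt
    have hFzero : F 0 = 0 := by
      rw [hF]
      apply Finset.sum_eq_zero
      intro c hc
      simp at hc
    have hFstep : ∀ ℓ : Fin Λ, F ((ℓ:ℕ)+1) = F (ℓ:ℕ) + κ' ℓ := by
      intro ℓ
      have : (Finset.univ.filter fun c : Fin Λ => (c:ℕ) < (ℓ:ℕ)+1)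
          = insert ℓ (Finset.univ.filter fun c : Fin Λ => (c:ℕ) < (ℓ:ℕ)) := by
        ext c
        simp only [Finset.mem_filter, Finset.mem_univ, true_and, Finset.mem_insert]
        constructor
        · intro h
          rcases Nat.lt_succ_iff_lt_or_eq.mp h with h' | h'
          · exact Or.inr h'
          · exact Or.inl (Fin.ext h')
        · rintro (rfl | h)
          · omega
          · omega
      rw [hF]
      simp only
      rw [this, Finset.sum_insert (by simp), add_comm]
    have hne : ∀ i : Fin k, (Finset.univ.filter fun ℓ : Fin Λ => (i:ℕ) < F ((ℓ:ℕ)+1)).Nonempty := by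
      intro i
      refine ⟨⟨Λ-1, by omega⟩, ?_⟩
      simp only [Finset.mem_filter, Finset.mem_univ, true_and]
      have : Λ - 1 + 1 = Λ := by omega
      rw [this, hFtop]
      exact i.isLt
    set ω : Fin k → Fin Λ := fun i => (Finset.univ.filter fun ℓ : Fin Λ => (i:ℕ) < F ((ℓ:ℕ)+1)).min' (hne i) with hω
    have hkey : ∀ (i : Fin k) (ℓ : Fin Λ), ω i = ℓ ↔ (F (ℓ:ℕ) ≤ (i:ℕ) ∧ (i:ℕ) < F ((ℓ:ℕ)+1)) := by
      intro i ℓ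
      constructor
      · rintro rfl
        have hmem := Finset.min'_mem _ (hne i)
        simp only [Finset.mem_filter, Finset.mem_univ, true_and] at hmem
        refine ⟨?_, hmem⟩
        by_contra hlt
        push_neg at hlt
        have hpos : 0 < ((ω i : Fin Λ) : ℕ) := by
          rcases Nat.eq_zero_or_pos ((ω i : Fin Λ) : ℕ) with h0 | h0
          · rw [h0, hFzero] at hlt; omega
          · exact h0
        set m : Fin Λ := ⟨(ω i : ℕ) - 1, by omega⟩ with hm
        have hmmem : m ∈ Finset.univ.filter fun ℓ : Fin Λ => (i:ℕ) < F ((ℓ:ℕ)+1) := by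
          simp only [Finset.mem_filter, Finset.mem_univ, true_and, hm]
          have : (ω i : ℕ) - 1 + 1 = (ω i : ℕ) := by omega
          simp only [this]
          exact hlt
        have := Finset.min'_le _ _ hmmem
        have hmlt : m < ω i := by
          rw [Fin.lt_def, hm]
          simp only
          omega
        exact absurd (lt_of_le_of_lt this hmlt) (lt_irrefl _)
      · rintro ⟨h1, h2⟩
        have hℓmem : ℓ ∈ Finset.univ.filter fun ℓ' : Fin Λ => (i:ℕ) < F ((ℓ':ℕ)+1) := by
          simp only [Finset.mem_filter, Finset.mem_univ, true_and]; exact h2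
        have hle : ω i ≤ ℓ := Finset.min'_le _ _ hℓmem
        have hmem2 : (i:ℕ) < F (((ω i : Fin Λ) : ℕ)+1) := by
          have h := Finset.min'_mem _ (hne i)
          simp only [Finset.mem_filter, Finset.mem_univ, true_and] at h
          exact h
        refine le_antisymm hle ?_
        by_contra hlt
        push_neg at hlt
        have hstep : ((ω i : Fin Λ) : ℕ) + 1 ≤ (ℓ:ℕ) := by
          rw [Fin.lt_def] at hlt; omega
        have := hFmono hstep
        omega
    refine ⟨ω, ?_⟩
    simp only [slice, Finset.mem_filter, Finset.mem_univ, true_and]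
    intro ℓ
    have : (Finset.univ.filter fun i : Fin k => ω i = ℓ)
        = Finset.univ.filter fun i : Fin k => F (ℓ:ℕ) ≤ (i:ℕ) ∧ (i:ℕ) < F ((ℓ:ℕ)+1) := by
      apply Finset.filter_congr
      intro i _
      exact (by simpa using hkey i ℓ)
    have hb : F ((ℓ:ℕ)+1) ≤ k := by
      have h1 := hFmono (show (ℓ:ℕ)+1 ≤ Λ from ℓ.isLt)
      rw [hFtop] at h1; exact h1
    rw [this, card_interval_fin _ _ _ (by have := hFstep ℓ; omega) hb]
    have := hFstep ℓ
    omega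


/- ### the color embedding `Fin (L-1) → Fin L` avoiding `ℓ` -/

def emb {L : ℕ} (ℓ : Fin L) (m : Fin (L - 1)) : Fin L :=
  if (m : ℕ) < (ℓ : ℕ) then ⟨m, by have := m.isLt; omega⟩
  else ⟨(m : ℕ) + 1, by have := m.isLt; omega⟩

lemma removeIdx_eq_emb {L : ℕ} (κ : Fin L → ℕ) (ℓ : Fin L) (m : Fin (L - 1)) :
    removeIdx κ ℓ m = κ (emb ℓ m) := by
  unfold removeIdx emb
  split <;> rfl

lemma emb_ne {L : ℕ} (ℓ : Fin L) (m : Fin (L - 1)) : emb ℓ m ≠ ℓ := by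
  unfold emb
  split <;> (intro h; rw [Fin.ext_iff] at h; simp at h; omega)

lemma emb_inj {L : ℕ} (ℓ : Fin L) : Function.Injective (emb ℓ) := by
  intro a b hab
  unfold emb at hab
  rw [Fin.ext_iff] at hab ⊢
  split at hab <;> split at hab <;> simp at hab <;> omega

lemma emb_surj {L : ℕ} (ℓ c : Fin L) (hc : c ≠ ℓ) : ∃ m, emb ℓ m = c := by
  have hL : 1 ≤ L := by have := ℓ.isLt; omega
  have hcl : (c:ℕ) ≠ (ℓ:ℕ) := fun h => hc (Fin.ext h)
  rcases lt_or_gt_of_ne hcl with h | h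
  · refine ⟨⟨(c:ℕ), by have := ℓ.isLt; omega⟩, ?_⟩
    unfold emb
    rw [if_pos (by simpa using h)]
  · refine ⟨⟨(c:ℕ) - 1, by have := c.isLt; omega⟩, ?_⟩
    unfold emb
    rw [if_neg (by simp; omega)]
    exact Fin.ext (by simp; omega)

lemma sum_removeIdx {L : ℕ} (κ : Fin L → ℕ) (ℓ : Fin L) :
    ∑ m, removeIdx κ ℓ m = (∑ c, κ c) - κ ℓ := by
  have h1 : ∑ m, removeIdx κ ℓ m = ∑ c ∈ Finset.univ.erase ℓ, κ c := by
    apply Finset.sum_bij (fun m _ => emb ℓ m)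
    · intro m _
      exact Finset.mem_erase.mpr ⟨emb_ne ℓ m, Finset.mem_univ _⟩
    · intro a _ b _ hab
      exact emb_inj ℓ hab
    · intro c hc
      obtain ⟨m, hm⟩ := emb_surj ℓ c (Finset.mem_erase.mp hc).1
      exact ⟨m, Finset.mem_univ _, hm⟩
    · intro m _
      exact removeIdx_eq_emb κ ℓ m
  rw [h1, ← Finset.add_sum_erase _ κ (Finset.mem_univ ℓ)]
  omega


/- ### projection to the two-color slice, and the fiber correspondence -/

def proj {L n : ℕ} (ℓ : Fin L) (ω : Fin n → Fin L) : Fin n → Fin 2 :=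
  fun i => if ω i = ℓ then 0 else 1

lemma mem_slice {L n : ℕ} {κ : Fin L → ℕ} {ω : Fin n → Fin L} :
    ω ∈ slice L n κ ↔ ∀ c, (Finset.univ.filter fun i => ω i = c).card = κ c := by
  simp [slice]

lemma fin2_eq_zero_of_ne_one {c : Fin 2} (h : c ≠ 1) : c = 0 := by
  have h1 : (c:ℕ) ≠ 1 := fun hh => h (Fin.ext hh)
  have := c.isLt
  exact Fin.ext (by omega)

lemma proj_mem {L n : ℕ} {κ : Fin L → ℕ} (hn : n = ∑ c, κ c) (ℓ : Fin L)
    {ω : Fin n → Fin L} (hω : ω ∈ slice L n κ) :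
    proj ℓ ω ∈ slice 2 n ![κ ℓ, n - κ ℓ] := by
  rw [mem_slice] at hω ⊢
  have h0 : (Finset.univ.filter fun i => proj ℓ ω i = 0) = (Finset.univ.filter fun i => ω i = ℓ) := by
    apply Finset.filter_congr
    intro i _
    unfold proj
    rcases eq_or_ne (ω i) ℓ with h | h
    · simp [h]
    · simp [h, Fin.ext_iff]
  have h1 : (Finset.univ.filter fun i => proj ℓ ω i = 1) = (Finset.univ.filter fun i => ¬ (ω i = ℓ)) := by
    apply Finset.filter_congr
    intro i _
    unfold proj
    rcases eq_or_ne (ω i) ℓ with h | h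
    · simp [h, Fin.ext_iff]
    · simp [h]
  intro c
  have hc2 : c = 0 ∨ c = 1 := by
    rcases eq_or_ne c 1 with h | h
    · exact Or.inr h
    · exact Or.inl (fin2_eq_zero_of_ne_one h)
  rcases hc2 with rfl | rfl
  · rw [h0, hω ℓ]
    rfl
  · rw [h1]
    have := Finset.card_filter_add_card_filter_not (s := (Finset.univ : Finset (Fin n)))
      (p := fun i => ω i = ℓ)
    rw [hω ℓ] at this
    simp only [Finset.card_univ, Fintype.card_fin] at this
    have : (Finset.univ.filter fun i => ¬ (ω i = ℓ)).card = n - κ ℓ := by omega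
    rw [this]
    rfl


lemma exists_fiber_equiv (L n : ℕ) (κ : Fin L → ℕ) (ℓ : Fin L) (x : Fin n → Fin 2)
    (hx : x ∈ slice 2 n ![κ ℓ, n - κ ℓ]) :
    ∃ (Φ : (Fin (n - κ ℓ) → Fin (L-1)) → (Fin n → Fin L)) (e : Fin (n - κ ℓ) → Fin n),
      (∀ ω' ∈ slice (L-1) (n - κ ℓ) (removeIdx κ ℓ),
          Φ ω' ∈ (slice L n κ).filter (fun ω => proj ℓ ω = x)) ∧
      (∀ a b, Φ a = Φ b → a = b) ∧
      (∀ ω ∈ (slice L n κ).filter (fun ω => proj ℓ ω = x),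
          ∃ ω', ω' ∈ slice (L-1) (n - κ ℓ) (removeIdx κ ℓ) ∧ Φ ω' = ω) ∧
      StrictMono e ∧ (∀ m, x (e m) = 1) ∧ (∀ i, x i = 1 → ∃ m, e m = i) ∧
      (∀ p q ω', Φ (ω' ∘ Equiv.swap p q) = Φ ω' ∘ Equiv.swap (e p) (e q)) := by
  classical
  rw [mem_slice] at hx
  set Sc : Finset (Fin n) := Finset.univ.filter (fun i => x i = 1) with hSc
  have hScard : Sc.card = n - κ ℓ := by
    have := hx 1
    simpa [hSc] using this
  set eIso := Sc.orderIsoOfFin hScard with heIso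
  set e : Fin (n - κ ℓ) → Fin n := fun m => (eIso m : Fin n) with he
  have he1 : ∀ m, x (e m) = 1 := fun m => (Finset.mem_filter.mp (eIso m).2).2
  have heinj : Function.Injective e := by
    intro a b hab
    have : eIso a = eIso b := Subtype.ext hab
    exact eIso.injective this
  have hemono : StrictMono e := by
    intro a b hab
    have := eIso.strictMono hab
    exact this
  have hesurj : ∀ i, x i = 1 → ∃ m, e m = i := by
    intro i hi
    have hmem : i ∈ Sc := by rw [hSc]; simp [hi]
    refine ⟨eIso.symm ⟨i, hmem⟩, ?_⟩
    rw [he]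
    simp
  set Φ : (Fin (n - κ ℓ) → Fin (L-1)) → (Fin n → Fin L) :=
    fun ω' i => if h : x i = 1 then emb ℓ (ω' (eIso.symm ⟨i, by rw [hSc]; simp [h]⟩)) else ℓ
    with hΦ
  have hΦe : ∀ ω' m, Φ ω' (e m) = emb ℓ (ω' m) := by
    intro ω' m
    rw [hΦ]
    simp only
    rw [dif_pos (he1 m)]
    congr 1
    have : (⟨e m, by rw [hSc]; simp [he1 m]⟩ : {y // y ∈ Sc}) = eIso m := Subtype.ext rfl
    rw [this]
    simp
  have hΦ0 : ∀ ω' i, x i ≠ 1 → Φ ω' i = ℓ := by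
    intro ω' i hi
    rw [hΦ]
    simp only
    rw [dif_neg hi]
  refine ⟨Φ, e, ?_, ?_, ?_, hemono, he1, hesurj, ?_⟩
  · -- maps into the fiber
    intro ω' hω'
    rw [mem_slice] at hω'
    rw [Finset.mem_filter]
    constructor
    · rw [mem_slice]
      intro c
      rcases eq_or_ne c ℓ with hc | hc
      · subst hc
        have hset : (Finset.univ.filter fun i => Φ ω' i = c)
            = Finset.univ.filter fun i => x i = 0 := by
          apply Finset.filter_congr
          intro i _
          rcases eq_or_ne (x i) 1 with h | h
          · have : Φ ω' i ≠ c := by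
              rw [hΦ]; simp only; rw [dif_pos h]; exact emb_ne c _
            simp [this, h, Fin.ext_iff]
          · have h0 := fin2_eq_zero_of_ne_one h
            simp [hΦ0 ω' i h, h0]
        rw [hset]
        have := hx 0
        simpa using this
      · obtain ⟨m₀, hm₀⟩ := emb_surj ℓ c hc
        have hcard : (Finset.univ.filter fun i => Φ ω' i = c).card
            = (Finset.univ.filter fun m => ω' m = m₀).card := by
          symm
          apply Finset.card_bij (fun m _ => e m)
          · intro m hm
            simp only [Finset.mem_filter, Finset.mem_univ, true_and] at hm ⊢
            rw [hΦe, hm, hm₀]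
          · intro a _ b _ hab
            exact heinj hab
          · intro i hi
            simp only [Finset.mem_filter, Finset.mem_univ, true_and] at hi
            have hxi : x i = 1 := by
              by_contra h
              rw [hΦ0 ω' i h] at hi
              exact hc hi.symm
            obtain ⟨m, hm⟩ := hesurj i hxi
            refine ⟨m, ?_, hm⟩
            simp only [Finset.mem_filter, Finset.mem_univ, true_and]
            apply emb_inj ℓ
            rw [← hΦe ω' m, hm, hi, hm₀]
        rw [hcard, hω' m₀, removeIdx_eq_emb, hm₀]
    · funext i
      rcases eq_or_ne (x i) 1 with h | h
      · have : Φ ω' i ≠ ℓ := by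
          rw [hΦ]; simp only; rw [dif_pos h]; exact emb_ne ℓ _
        unfold proj
        rw [if_neg this, h]
      · have h0 := fin2_eq_zero_of_ne_one h
        unfold proj
        rw [hΦ0 ω' i h, if_pos rfl, h0]
  · -- injective
    intro a b hab
    funext m
    have := congrFun hab (e m)
    rw [hΦe, hΦe] at this
    exact emb_inj ℓ this
  · -- surjective onto the fiber
    intro ω hω
    rw [Finset.mem_filter, mem_slice] at hω
    obtain ⟨hω1, hω2⟩ := hω
    have hx1 : ∀ i, x i = 1 ↔ ω i ≠ ℓ := by
      intro i
      rw [← hω2]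
      unfold proj
      rcases eq_or_ne (ω i) ℓ with h | h
      · simp [h, Fin.ext_iff]
      · simp [h]
    have hne : ∀ m, ω (e m) ≠ ℓ := fun m => (hx1 (e m)).mp (he1 m)
    set ω' : Fin (n - κ ℓ) → Fin (L-1) :=
      fun m => Classical.choose (emb_surj ℓ (ω (e m)) (hne m)) with hω'
    have hspec : ∀ m, emb ℓ (ω' m) = ω (e m) :=
      fun m => Classical.choose_spec (emb_surj ℓ (ω (e m)) (hne m))
    refine ⟨ω', ?_, ?_⟩
    · rw [mem_slice]
      intro m₀
      rw [removeIdx_eq_emb]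
      have hcard : (Finset.univ.filter fun m => ω' m = m₀).card
          = (Finset.univ.filter fun i => ω i = emb ℓ m₀).card := by
        apply Finset.card_bij (fun m _ => e m)
        · intro m hm
          simp only [Finset.mem_filter, Finset.mem_univ, true_and] at hm ⊢
          rw [← hspec, hm]
        · intro a _ b _ hab
          exact heinj hab
        · intro i hi
          simp only [Finset.mem_filter, Finset.mem_univ, true_and] at hi
          have hxi : x i = 1 := (hx1 i).mpr (by rw [hi]; exact emb_ne ℓ m₀)
          obtain ⟨m, hm⟩ := hesurj i hxi
          refine ⟨m, ?_, hm⟩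
          simp only [Finset.mem_filter, Finset.mem_univ, true_and]
          apply emb_inj ℓ
          rw [hspec, hm, hi]
      rw [hcard, hω1 (emb ℓ m₀)]
    · funext i
      rcases eq_or_ne (x i) 1 with h | h
      · obtain ⟨m, hm⟩ := hesurj i h
        rw [← hm, hΦe, hspec]
      · have h0 : ω i = ℓ := by
          by_contra hh
          exact h ((hx1 i).mpr hh)
        rw [hΦ0 ω' i h, h0]
  · -- swap intertwining
    intro p q ω'
    funext i
    rcases eq_or_ne (x i) 1 with h | h
    · obtain ⟨m, hm⟩ := hesurj i h
      subst hm
      have hswap : Equiv.swap (e p) (e q) (e m) = e (Equiv.swap p q m) :=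
        heinj.swap_apply p q m
      calc Φ (ω' ∘ Equiv.swap p q) (e m) = emb ℓ (ω' (Equiv.swap p q m)) := hΦe _ m
        _ = Φ ω' (e (Equiv.swap p q m)) := (hΦe _ _).symm
        _ = Φ ω' (Equiv.swap (e p) (e q) (e m)) := by rw [hswap]
        _ = (Φ ω' ∘ Equiv.swap (e p) (e q)) (e m) := rfl
    · have hip : i ≠ e p := fun hh => h (hh ▸ he1 p)
      have hiq : i ≠ e q := fun hh => h (hh ▸ he1 q)
      have hswap : Equiv.swap (e p) (e q) i = i := Equiv.swap_apply_of_ne_of_ne hip hiq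
      calc Φ (ω' ∘ Equiv.swap p q) i = ℓ := hΦ0 _ i h
        _ = Φ ω' i := (hΦ0 _ i h).symm
        _ = (Φ ω' ∘ Equiv.swap (e p) (e q)) i := by simp [hswap]


noncomputable def indIn {L n : ℕ} (ℓ : Fin L) (i j : Fin n)
    (h : (Fin n → Fin L) → ℝ) (ω : Fin n → Fin L) : ℝ :=
  if ω i ≠ ℓ ∧ ω j ≠ ℓ then grad i j h ω * grad i j h ω else 0

noncomputable def indCross {L n : ℕ} (ℓ : Fin L) (i j : Fin n)
    (h : (Fin n → Fin L) → ℝ) (ω : Fin n → Fin L) : ℝ :=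
  if (ω i = ℓ) ↔ (ω j = ℓ) then 0 else grad i j h ω * grad i j h ω

lemma indIn_nonneg {L n : ℕ} (ℓ : Fin L) (i j : Fin n) (h : (Fin n → Fin L) → ℝ)
    (ω : Fin n → Fin L) : 0 ≤ indIn ℓ i j h ω := by
  unfold indIn; split
  · exact mul_self_nonneg _
  · exact le_rfl

lemma indCross_nonneg {L n : ℕ} (ℓ : Fin L) (i j : Fin n) (h : (Fin n → Fin L) → ℝ)
    (ω : Fin n → Fin L) : 0 ≤ indCross ℓ i j h ω := by
  unfold indCross; split
  · exact le_rfl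
  · exact mul_self_nonneg _

lemma proj_eq_one_iff {L n : ℕ} (ℓ : Fin L) (ω : Fin n → Fin L) (i : Fin n) :
    proj ℓ ω i = 1 ↔ ω i ≠ ℓ := by
  unfold proj
  rcases eq_or_ne (ω i) ℓ with h | h
  · simp [h, Fin.ext_iff]
  · simp [h]

lemma proj_eq_zero_iff {L n : ℕ} (ℓ : Fin L) (ω : Fin n → Fin L) (i : Fin n) :
    proj ℓ ω i = 0 ↔ ω i = ℓ := by
  unfold proj
  rcases eq_or_ne (ω i) ℓ with h | h
  · simp [h]
  · simp [h, Fin.ext_iff]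

lemma fiber_entropy_bound (L n : ℕ) (κ : Fin L → ℕ) (ℓ : Fin L) (τℓ : ℝ)
    (hτℓ : ∀ g : (Fin (n - κ ℓ) → Fin (L - 1)) → ℝ, (∀ ω, 0 ≤ g ω) →
        entropy (slice (L - 1) (n - κ ℓ) (removeIdx κ ℓ)) g ≤
          τℓ * dirichlet (slice (L - 1) (n - κ ℓ) (removeIdx κ ℓ))
            (fun ω => Real.sqrt (g ω)) (fun ω => Real.sqrt (g ω)))
    (f : (Fin n → Fin L) → ℝ) (hf : ∀ ω, 0 ≤ f ω)
    (x : Fin n → Fin 2) (hx : x ∈ slice 2 n ![κ ℓ, n - κ ℓ]) :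
    entropy ((slice L n κ).filter (fun ω => proj ℓ ω = x)) f ≤
      τℓ * ((1 / (2 * ((n - κ ℓ : ℕ) : ℝ))) *
        ∑ p ∈ Finset.univ.filter (fun p : Fin n × Fin n => p.1 < p.2),
          expect ((slice L n κ).filter (fun ω => proj ℓ ω = x))
            (indIn ℓ p.1 p.2 (fun ω => Real.sqrt (f ω)))) := by
  classical
  obtain ⟨Φ, e, hmap, hinj, hsurj, hmono, hx1, hsur2, hswap⟩ := exists_fiber_equiv L n κ ℓ x hx
  have hb2 : ∀ a ∈ slice (L-1) (n - κ ℓ) (removeIdx κ ℓ), ∀ b ∈ slice (L-1) (n - κ ℓ) (removeIdx κ ℓ),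
      Φ a = Φ b → a = b := fun a _ b _ h => hinj a b h
  have hb3 : ∀ ω ∈ (slice L n κ).filter (fun ω => proj ℓ ω = x),
      ∃ ω', ∃ _ : ω' ∈ slice (L-1) (n - κ ℓ) (removeIdx κ ℓ), Φ ω' = ω := by
    intro ω hω
    obtain ⟨ω', h1, h2⟩ := hsurj ω hω
    exact ⟨ω', h1, h2⟩
  have hent : entropy ((slice L n κ).filter (fun ω => proj ℓ ω = x)) f
      = entropy (slice (L-1) (n - κ ℓ) (removeIdx κ ℓ)) (fun ω' => f (Φ ω')) :=
    entropy_map hmap hb2 hb3 f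
  have happ := hτℓ (fun ω' => f (Φ ω')) (fun ω' => hf _)
  rw [hent]
  refine le_trans happ (le_of_eq ?_)
  congr 1
  unfold dirichlet
  congr 1
  -- transport each pair-term through Φ
  have hgrad : ∀ (p q : Fin (n - κ ℓ)) (ω' : Fin (n - κ ℓ) → Fin (L-1)),
      grad p q (fun y => Real.sqrt (f (Φ y))) ω'
        = grad (e p) (e q) (fun ω => Real.sqrt (f ω)) (Φ ω') := by
    intro p q ω'
    unfold grad
    rw [show Φ ω' ∘ Equiv.swap (e p) (e q) = Φ (ω' ∘ Equiv.swap p q) from (hswap p q ω').symm]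
  have hexp : ∀ (p q : Fin (n - κ ℓ)),
      expect (slice (L-1) (n - κ ℓ) (removeIdx κ ℓ))
          (fun ω' => grad p q (fun y => Real.sqrt (f (Φ y))) ω'
            * grad p q (fun y => Real.sqrt (f (Φ y))) ω')
        = expect ((slice L n κ).filter (fun ω => proj ℓ ω = x))
            (fun ω => grad (e p) (e q) (fun y => Real.sqrt (f y)) ω
              * grad (e p) (e q) (fun y => Real.sqrt (f y)) ω) := by
    intro p q
    rw [expect_map hmap hb2 hb3 (fun ω => grad (e p) (e q) (fun y => Real.sqrt (f y)) ω
      * grad (e p) (e q) (fun y => Real.sqrt (f y)) ω)]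
    apply expect_congr
    intro ω' _
    rw [hgrad p q ω']
  rw [Finset.sum_congr rfl (fun p _ => hexp p.1 p.2)]
  -- reindex pairs through e
  set T : Finset (Fin n × Fin n) :=
    Finset.univ.filter (fun q : Fin n × Fin n => q.1 < q.2 ∧ x q.1 = 1 ∧ x q.2 = 1) with hT
  have hsum1 : ∑ p ∈ Finset.univ.filter (fun p : Fin (n - κ ℓ) × Fin (n - κ ℓ) => p.1 < p.2),
      expect ((slice L n κ).filter (fun ω => proj ℓ ω = x))
        (fun ω => grad (e p.1) (e p.2) (fun y => Real.sqrt (f y)) ω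
          * grad (e p.1) (e p.2) (fun y => Real.sqrt (f y)) ω)
      = ∑ q ∈ T, expect ((slice L n κ).filter (fun ω => proj ℓ ω = x))
          (fun ω => grad q.1 q.2 (fun y => Real.sqrt (f y)) ω
            * grad q.1 q.2 (fun y => Real.sqrt (f y)) ω) := by
    apply Finset.sum_bij (fun p _ => ((e p.1, e p.2) : Fin n × Fin n))
    · intro p hp
      simp only [Finset.mem_filter, Finset.mem_univ, true_and] at hp
      simp only [hT, Finset.mem_filter, Finset.mem_univ, true_and]
      exact ⟨hmono hp, hx1 p.1, hx1 p.2⟩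
    · intro a _ b _ hab
      have h1 := congrArg Prod.fst hab
      have h2 := congrArg Prod.snd hab
      simp only at h1 h2
      exact Prod.ext (hmono.injective h1) (hmono.injective h2)
    · intro q hq
      simp only [hT, Finset.mem_filter, Finset.mem_univ, true_and] at hq
      obtain ⟨hlt, hq1, hq2⟩ := hq
      obtain ⟨a, ha⟩ := hsur2 q.1 hq1
      obtain ⟨b, hb⟩ := hsur2 q.2 hq2
      refine ⟨(a, b), ?_, ?_⟩
      · simp only [Finset.mem_filter, Finset.mem_univ, true_and]
        rw [← hmono.lt_iff_lt, ha, hb]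
        exact hlt
      · simp only
        rw [ha, hb]
    · intro p _
      rfl
  rw [hsum1]
  -- extend the sum from T to all pairs using the indicator
  have hval : ∀ q ∈ T, expect ((slice L n κ).filter (fun ω => proj ℓ ω = x))
      (fun ω => grad q.1 q.2 (fun y => Real.sqrt (f y)) ω
        * grad q.1 q.2 (fun y => Real.sqrt (f y)) ω)
      = expect ((slice L n κ).filter (fun ω => proj ℓ ω = x))
          (indIn ℓ q.1 q.2 (fun ω => Real.sqrt (f ω))) := by
    intro q hq
    simp only [hT, Finset.mem_filter, Finset.mem_univ, true_and] at hq
    apply expect_congr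
    intro ω hω
    rw [Finset.mem_filter] at hω
    have hproj := hω.2
    have h1 : ω q.1 ≠ ℓ := (proj_eq_one_iff ℓ ω q.1).mp (by rw [hproj]; exact hq.2.1)
    have h2 : ω q.2 ≠ ℓ := (proj_eq_one_iff ℓ ω q.2).mp (by rw [hproj]; exact hq.2.2)
    unfold indIn
    rw [if_pos ⟨h1, h2⟩]
  rw [Finset.sum_congr rfl hval]
  apply Finset.sum_subset
  · intro q hq
    simp only [hT, Finset.mem_filter, Finset.mem_univ, true_and] at hq ⊢
    exact hq.1
  · intro q hq hqT
    simp only [Finset.mem_filter, Finset.mem_univ, true_and] at hq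
    simp only [hT, Finset.mem_filter, Finset.mem_univ, true_and] at hqT
    have : ¬ (x q.1 = 1 ∧ x q.2 = 1) := fun h => hqT ⟨hq, h.1, h.2⟩
    rw [show expect ((slice L n κ).filter (fun ω => proj ℓ ω = x))
        (indIn ℓ q.1 q.2 (fun ω => Real.sqrt (f ω)))
      = expect ((slice L n κ).filter (fun ω => proj ℓ ω = x)) (fun _ => (0:ℝ)) from ?_]
    · exact expect_zero _
    · apply expect_congr
      intro ω hω
      rw [Finset.mem_filter] at hω
      have hproj := hω.2
      have : ω q.1 = ℓ ∨ ω q.2 = ℓ := by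
        by_contra hcon
        push_neg at hcon
        refine this ⟨?_, ?_⟩
        · rw [← hproj]; exact (proj_eq_one_iff ℓ ω q.1).mpr hcon.1
        · rw [← hproj]; exact (proj_eq_one_iff ℓ ω q.2).mpr hcon.2
      unfold indIn
      rw [if_neg (by tauto)]


lemma slice_swap {L n : ℕ} {κ : Fin L → ℕ} (i j : Fin n) {ω : Fin n → Fin L}
    (hω : ω ∈ slice L n κ) : ω ∘ Equiv.swap i j ∈ slice L n κ := by
  rw [mem_slice] at hω ⊢
  intro c
  rw [← hω c]
  apply Finset.card_bij (fun a _ => Equiv.swap i j a)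
  · intro a ha
    simp only [Finset.mem_filter, Finset.mem_univ, true_and] at ha ⊢
    exact ha
  · intro a _ b _ hab
    exact (Equiv.swap i j).injective hab
  · intro b hb
    simp only [Finset.mem_filter, Finset.mem_univ, true_and] at hb
    refine ⟨Equiv.swap i j b, ?_, Equiv.swap_apply_self i j b⟩
    simp only [Finset.mem_filter, Finset.mem_univ, true_and, Function.comp_apply]
    rw [Equiv.swap_apply_self]
    exact hb

lemma comp_swap_swap {α β : Type*} [DecidableEq α] (x : α → β) (i j : α) :
    (x ∘ Equiv.swap i j) ∘ Equiv.swap i j = x := by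
  funext a
  simp [Function.comp_apply, Equiv.swap_apply_self]

/-- Cauchy–Schwarz: the squared gap of square-root averages is at most the average squared
square-root gap. -/
lemma sqrt_expect_gap {L n : ℕ} (Ω : Finset (Fin n → Fin L)) (u v : (Fin n → Fin L) → ℝ)
    (hu : ∀ ω ∈ Ω, 0 ≤ u ω) (hv : ∀ ω ∈ Ω, 0 ≤ v ω) :
    (Real.sqrt (expect Ω u) - Real.sqrt (expect Ω v))
      * (Real.sqrt (expect Ω u) - Real.sqrt (expect Ω v))
      ≤ expect Ω (fun ω => (Real.sqrt (u ω) - Real.sqrt (v ω))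
          * (Real.sqrt (u ω) - Real.sqrt (v ω))) := by
  classical
  rcases Finset.eq_empty_or_nonempty Ω with rfl | hne
  · simp [expect]
  set A := ∑ ω ∈ Ω, u ω with hA
  set B := ∑ ω ∈ Ω, v ω with hB
  set C := ∑ ω ∈ Ω, Real.sqrt (u ω) * Real.sqrt (v ω) with hC
  have hA0 : 0 ≤ A := Finset.sum_nonneg hu
  have hB0 : 0 ≤ B := Finset.sum_nonneg hv
  have hC0 : 0 ≤ C := Finset.sum_nonneg fun ω _ =>
    mul_nonneg (Real.sqrt_nonneg _) (Real.sqrt_nonneg _)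
  have hCS : C ^ 2 ≤ A * B := by
    have h := Finset.sum_mul_sq_le_sq_mul_sq Ω (fun ω => Real.sqrt (u ω)) (fun ω => Real.sqrt (v ω))
    rw [Finset.sum_congr rfl (fun ω hω => Real.sq_sqrt (hu ω hω)),
      Finset.sum_congr rfl (fun ω hω => Real.sq_sqrt (hv ω hω))] at h
    exact h
  have hCle : C ≤ Real.sqrt A * Real.sqrt B := by
    calc C = Real.sqrt (C ^ 2) := (Real.sqrt_sq hC0).symm
      _ ≤ Real.sqrt (A * B) := Real.sqrt_le_sqrt hCS
      _ = Real.sqrt A * Real.sqrt B := Real.sqrt_mul hA0 B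
  have hrhs : (∑ ω ∈ Ω, (Real.sqrt (u ω) - Real.sqrt (v ω)) * (Real.sqrt (u ω) - Real.sqrt (v ω)))
      = A + B - 2 * C := by
    rw [hA, hB, hC, ← Finset.sum_add_distrib, Finset.mul_sum, ← Finset.sum_sub_distrib]
    apply Finset.sum_congr rfl
    intro ω hω
    have h1 : Real.sqrt (u ω) * Real.sqrt (u ω) = u ω := Real.mul_self_sqrt (hu ω hω)
    have h2 : Real.sqrt (v ω) * Real.sqrt (v ω) = v ω := Real.mul_self_sqrt (hv ω hω)
    nlinarith [h1, h2]
  have hcard : (0:ℝ) < (Ω.card : ℝ) := by exact_mod_cast hne.card_pos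
  unfold expect
  rw [hrhs]
  rw [show (∑ ω ∈ Ω, u ω) = A from rfl, show (∑ ω ∈ Ω, v ω) = B from rfl]
  have hsA : Real.sqrt A * Real.sqrt A = A := Real.mul_self_sqrt hA0
  have hsB : Real.sqrt B * Real.sqrt B = B := Real.mul_self_sqrt hB0
  have hN : Real.sqrt (Ω.card) * Real.sqrt (Ω.card) = (Ω.card : ℝ) :=
    Real.mul_self_sqrt (le_of_lt hcard)
  have hNpos : 0 < Real.sqrt (Ω.card) := Real.sqrt_pos.mpr hcard
  have hLHS : (Real.sqrt (A / (Ω.card:ℝ)) - Real.sqrt (B / (Ω.card:ℝ)))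
      * (Real.sqrt (A / (Ω.card:ℝ)) - Real.sqrt (B / (Ω.card:ℝ)))
      = (A + B - 2 * (Real.sqrt A * Real.sqrt B)) / ((Ω.card:ℝ)) := by
    rw [Real.sqrt_div hA0, Real.sqrt_div hB0]
    rw [← hN]
    field_simp
    rw [Real.sqrt_sq hNpos.le]
    linear_combination (Real.sqrt (Ω.card : ℝ)) ^ 2 * (hsA + hsB)
  rw [hLHS]
  have hnum : A + B - 2 * (Real.sqrt A * Real.sqrt B) ≤ A + B - 2 * C := by linarith
  gcongr


lemma proj_comp_swap {L n : ℕ} (ℓ : Fin L) (ω : Fin n → Fin L) (i j : Fin n) :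
    proj ℓ (ω ∘ Equiv.swap i j) = proj ℓ ω ∘ Equiv.swap i j := rfl

lemma cross_bound (L n : ℕ) (κ : Fin L → ℕ) (ℓ : Fin L)
    (f : (Fin n → Fin L) → ℝ) (hf : ∀ ω, 0 ≤ f ω) (i j : Fin n) (x : Fin n → Fin 2) :
    grad i j (fun y => Real.sqrt (expect ((slice L n κ).filter (fun ω => proj ℓ ω = y)) f)) x
      * grad i j (fun y => Real.sqrt (expect ((slice L n κ).filter (fun ω => proj ℓ ω = y)) f)) x
      ≤ expect ((slice L n κ).filter (fun ω => proj ℓ ω = x))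
          (indCross ℓ i j (fun ω => Real.sqrt (f ω))) := by
  classical
  rcases eq_or_ne (x i) (x j) with hxy | hxy
  · have hxs : x ∘ Equiv.swap i j = x := by
      funext a
      simp only [Function.comp_apply, Equiv.swap_apply_def]
      split_ifs with h1 h2
      · subst h1; exact hxy.symm
      · subst h2; exact hxy
      · rfl
    have h0 : grad i j (fun y => Real.sqrt
        (expect ((slice L n κ).filter (fun ω => proj ℓ ω = y)) f)) x = 0 := by
      unfold grad
      rw [hxs, sub_self]
    rw [h0, zero_mul]
    exact expect_nonneg (fun ω _ => indCross_nonneg ℓ i j _ ω)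
  · -- swap gives a bijection between the fibers over x and over x ∘ swap
    have hmaps : ∀ ω ∈ (slice L n κ).filter (fun ω => proj ℓ ω = x),
        ω ∘ Equiv.swap i j ∈ (slice L n κ).filter (fun ω => proj ℓ ω = x ∘ Equiv.swap i j) := by
      intro ω hω
      rw [Finset.mem_filter] at hω ⊢
      exact ⟨slice_swap i j hω.1, by rw [proj_comp_swap, hω.2]⟩
    have hinj : ∀ a ∈ (slice L n κ).filter (fun ω => proj ℓ ω = x),
        ∀ b ∈ (slice L n κ).filter (fun ω => proj ℓ ω = x),
        a ∘ Equiv.swap i j = b ∘ Equiv.swap i j → a = b := by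
      intro a _ b _ hab
      have := congrArg (fun y => y ∘ Equiv.swap i j) hab
      simpa [comp_swap_swap] using this
    have hsurj : ∀ ω' ∈ (slice L n κ).filter (fun ω => proj ℓ ω = x ∘ Equiv.swap i j),
        ∃ ω, ∃ _ : ω ∈ (slice L n κ).filter (fun ω => proj ℓ ω = x), ω ∘ Equiv.swap i j = ω' := by
      intro ω' hω'
      rw [Finset.mem_filter] at hω'
      refine ⟨ω' ∘ Equiv.swap i j, ?_, comp_swap_swap ω' i j⟩
      rw [Finset.mem_filter]
      refine ⟨slice_swap i j hω'.1, ?_⟩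
      rw [proj_comp_swap, hω'.2, comp_swap_swap]
    have hbar : expect ((slice L n κ).filter (fun ω => proj ℓ ω = x ∘ Equiv.swap i j)) f
        = expect ((slice L n κ).filter (fun ω => proj ℓ ω = x))
            (fun ω => f (ω ∘ Equiv.swap i j)) :=
      expect_map hmaps hinj hsurj f
    have hgap := sqrt_expect_gap ((slice L n κ).filter (fun ω => proj ℓ ω = x))
      (fun ω => f (ω ∘ Equiv.swap i j)) f (fun ω _ => hf _) (fun ω _ => hf _)
    have hgrad : grad i j (fun y => Real.sqrt
        (expect ((slice L n κ).filter (fun ω => proj ℓ ω = y)) f)) x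
        = Real.sqrt (expect ((slice L n κ).filter (fun ω => proj ℓ ω = x))
            (fun ω => f (ω ∘ Equiv.swap i j)))
          - Real.sqrt (expect ((slice L n κ).filter (fun ω => proj ℓ ω = x)) f) := by
      unfold grad
      beta_reduce
      rw [hbar]
    rw [hgrad]
    refine le_trans hgap (le_of_eq ?_)
    apply expect_congr
    intro ω hω
    rw [Finset.mem_filter] at hω
    have hproj := hω.2
    have hcond : ¬ ((ω i = ℓ) ↔ (ω j = ℓ)) := by
      intro hiff
      apply hxy
      rw [← hproj]
      unfold proj
      rcases eq_or_ne (ω i) ℓ with h | h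
      · rw [if_pos h, if_pos (hiff.mp h)]
      · rw [if_neg h, if_neg (fun hh => h (hiff.mpr hh))]
    unfold indCross
    rw [if_neg hcond]
    rfl

lemma outer_bound (L n : ℕ) (κ : Fin L → ℕ) (ℓ : Fin L) (σℓ : ℝ) (hσ0 : 0 ≤ σℓ)
    (hσℓ : ∀ g : (Fin n → Fin 2) → ℝ, (∀ ω, 0 ≤ g ω) →
      entropy (slice 2 n ![κ ℓ, n - κ ℓ]) g ≤
        σℓ * dirichlet (slice 2 n ![κ ℓ, n - κ ℓ])
          (fun ω => Real.sqrt (g ω)) (fun ω => Real.sqrt (g ω)))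
    (f : (Fin n → Fin L) → ℝ) (hf : ∀ ω, 0 ≤ f ω) :
    entropy (slice 2 n ![κ ℓ, n - κ ℓ])
        (fun x => expect ((slice L n κ).filter (fun ω => proj ℓ ω = x)) f)
      ≤ σℓ * ((1 / (2 * (n:ℝ))) *
          ∑ p ∈ Finset.univ.filter (fun p : Fin n × Fin n => p.1 < p.2),
            expect (slice 2 n ![κ ℓ, n - κ ℓ]) (fun x =>
              expect ((slice L n κ).filter (fun ω => proj ℓ ω = x))
                (indCross ℓ p.1 p.2 (fun ω => Real.sqrt (f ω))))) := by
  refine le_trans (hσℓ (fun x => expect ((slice L n κ).filter (fun ω => proj ℓ ω = x)) f)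
    (fun x => expect_nonneg (fun ω _ => hf ω))) ?_
  apply mul_le_mul_of_nonneg_left ?_ hσ0
  unfold dirichlet
  apply mul_le_mul_of_nonneg_left ?_ (by positivity)
  apply Finset.sum_le_sum
  intro p _
  apply expect_le
  intro x hx
  exact cross_bound L n κ ℓ f hf p.1 p.2 x


lemma per_color (L n : ℕ) (hL : 2 ≤ L) (κ : Fin L → ℕ) (hκ : ∀ c, 0 < κ c)
    (hn : n = ∑ c, κ c) (ℓ : Fin L) (τℓ σℓ : ℝ) (hσ0 : 0 ≤ σℓ)
    (hτℓ : ∀ g : (Fin (n - κ ℓ) → Fin (L - 1)) → ℝ, (∀ ω, 0 ≤ g ω) →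
        entropy (slice (L - 1) (n - κ ℓ) (removeIdx κ ℓ)) g ≤
          τℓ * dirichlet (slice (L - 1) (n - κ ℓ) (removeIdx κ ℓ))
            (fun ω => Real.sqrt (g ω)) (fun ω => Real.sqrt (g ω)))
    (hσℓ : ∀ g : (Fin n → Fin 2) → ℝ, (∀ ω, 0 ≤ g ω) →
      entropy (slice 2 n ![κ ℓ, n - κ ℓ]) g ≤
        σℓ * dirichlet (slice 2 n ![κ ℓ, n - κ ℓ])
          (fun ω => Real.sqrt (g ω)) (fun ω => Real.sqrt (g ω)))
    (f : (Fin n → Fin L) → ℝ) (hf : ∀ ω, 0 ≤ f ω) :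
    entropy (slice L n κ) f ≤
      τℓ * ((1 / (2 * ((n - κ ℓ : ℕ) : ℝ))) *
        ∑ p ∈ Finset.univ.filter (fun p : Fin n × Fin n => p.1 < p.2),
          expect (slice L n κ) (indIn ℓ p.1 p.2 (fun ω => Real.sqrt (f ω))))
      + σℓ * ((1 / (2 * (n:ℝ))) *
        ∑ p ∈ Finset.univ.filter (fun p : Fin n × Fin n => p.1 < p.2),
          expect (slice L n κ) (indCross ℓ p.1 p.2 (fun ω => Real.sqrt (f ω)))) := by
  classical
  have hκn : κ ℓ ≤ n := by
    rw [hn]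
    exact Finset.single_le_sum (fun c _ => Nat.zero_le _) (Finset.mem_univ ℓ)
  have hsum' : ∑ m, removeIdx κ ℓ m = n - κ ℓ := by
    rw [sum_removeIdx, ← hn]
  have hslice' := slice_nonempty (L-1) (n - κ ℓ) (removeIdx κ ℓ) hsum'
  set M := (slice (L-1) (n - κ ℓ) (removeIdx κ ℓ)).card with hM
  have hMpos : 0 < M := Finset.card_pos.mpr hslice'
  have hΩ₂ : (slice 2 n ![κ ℓ, n - κ ℓ]).Nonempty := by
    apply slice_nonempty
    rw [Fin.sum_univ_two]
    simp only [Matrix.cons_val_zero, Matrix.cons_val_one, Matrix.head_cons]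
    omega
  have hmaps : ∀ ω ∈ slice L n κ, proj ℓ ω ∈ slice 2 n ![κ ℓ, n - κ ℓ] :=
    fun ω hω => proj_mem hn ℓ hω
  have hfib : ∀ x ∈ slice 2 n ![κ ℓ, n - κ ℓ],
      ((slice L n κ).filter (fun ω => proj ℓ ω = x)).card = M := by
    intro x hx
    obtain ⟨Φ, e, h1, h2, h3, _, _, _, _⟩ := exists_fiber_equiv L n κ ℓ x hx
    rw [hM]
    symm
    apply Finset.card_bij (fun ω' _ => Φ ω') h1 (fun a _ b _ hh => h2 a b hh)
    intro ω hω
    obtain ⟨ω', hh1, hh2⟩ := h3 ω hω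
    exact ⟨ω', hh1, hh2⟩
  have hchain := entropy_chain (slice L n κ) (slice 2 n ![κ ℓ, n - κ ℓ]) (proj ℓ)
    hmaps hMpos hfib hΩ₂ f
  rw [hchain]
  have htower : ∀ h : (Fin n → Fin L) → ℝ,
      expect (slice 2 n ![κ ℓ, n - κ ℓ]) (fun x =>
        expect ((slice L n κ).filter (fun ω => proj ℓ ω = x)) h) = expect (slice L n κ) h :=
    fun h => (expect_tower (slice L n κ) (slice 2 n ![κ ℓ, n - κ ℓ]) (proj ℓ)
      hmaps hMpos hfib hΩ₂ h).symm
  have hA : expect (slice 2 n ![κ ℓ, n - κ ℓ])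
      (fun x => entropy ((slice L n κ).filter (fun ω => proj ℓ ω = x)) f)
      ≤ τℓ * ((1 / (2 * ((n - κ ℓ : ℕ) : ℝ))) *
        ∑ p ∈ Finset.univ.filter (fun p : Fin n × Fin n => p.1 < p.2),
          expect (slice L n κ) (indIn ℓ p.1 p.2 (fun ω => Real.sqrt (f ω)))) := by
    refine le_trans (expect_le (fun x hx =>
      fiber_entropy_bound L n κ ℓ τℓ hτℓ f hf x hx)) (le_of_eq ?_)
    rw [expect_smul, expect_smul, expect_sum]
    congr 2
    refine Finset.sum_congr rfl fun p _ => ?_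
    exact htower (indIn ℓ p.1 p.2 (fun ω => Real.sqrt (f ω)))
  have hB : entropy (slice 2 n ![κ ℓ, n - κ ℓ])
      (fun x => expect ((slice L n κ).filter (fun ω => proj ℓ ω = x)) f)
      ≤ σℓ * ((1 / (2 * (n:ℝ))) *
        ∑ p ∈ Finset.univ.filter (fun p : Fin n × Fin n => p.1 < p.2),
          expect (slice L n κ) (indCross ℓ p.1 p.2 (fun ω => Real.sqrt (f ω)))) := by
    refine le_trans (outer_bound L n κ ℓ σℓ hσ0 hσℓ f hf) (le_of_eq ?_)
    congr 2
    refine Finset.sum_congr rfl fun p _ => ?_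
    exact htower (indCross ℓ p.1 p.2 (fun ω => Real.sqrt (f ω)))
  exact add_le_add hA hB


lemma grad_eq_zero_of_apply_eq {L n : ℕ} (i j : Fin n) (h : (Fin n → Fin L) → ℝ)
    (ω : Fin n → Fin L) (hij : ω i = ω j) : grad i j h ω = 0 := by
  unfold grad
  rw [show ω ∘ Equiv.swap i j = ω by
    funext a
    simp only [Function.comp_apply, Equiv.swap_apply_def]
    split_ifs with h1 h2
    · subst h1; exact hij.symm
    · subst h2; exact hij
    · rfl]
  exact sub_self _

lemma pointwise_combine (L n : ℕ) (hL : 2 ≤ L) (hn0 : 0 < n) (κ : Fin L → ℕ)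
    (hκn : ∀ c, κ c ≤ n) (τ σ : Fin L → ℝ) (hτ0 : ∀ c, 0 ≤ τ c) (hσ0 : ∀ c, 0 ≤ σ c)
    (hLne : (Finset.univ : Finset (Fin L)).Nonempty)
    (i j : Fin n) (sf : (Fin n → Fin L) → ℝ) (ω : Fin n → Fin L) :
    ∑ c, (τ c * indIn c i j sf ω
        + ((n - κ c : ℕ) : ℝ) / (n:ℝ) * σ c * indCross c i j sf ω)
      ≤ (((L:ℝ) - 2) * (Finset.univ.sup' hLne τ)
          + Finset.univ.sup' hLne (fun c => 2 * (1 - (κ c : ℝ) / (n : ℝ)) * σ c))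
        * (grad i j sf ω * grad i j sf ω) := by
  classical
  set g : ℝ := grad i j sf ω * grad i j sf ω with hgdef
  have hg : 0 ≤ g := mul_self_nonneg _
  set maxτ : ℝ := Finset.univ.sup' hLne τ with hmaxτ
  set maxσ : ℝ := Finset.univ.sup' hLne (fun c => 2 * (1 - (κ c : ℝ) / (n : ℝ)) * σ c) with hmaxσ
  have hmaxτ0 : 0 ≤ maxτ := by
    obtain ⟨c, hc⟩ := hLne
    exact le_trans (hτ0 c) (Finset.le_sup' τ hc)
  have hcoef : ∀ c : Fin L, ((n - κ c : ℕ) : ℝ) / (n:ℝ) = 1 - (κ c : ℝ) / (n:ℝ) := by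
    intro c
    rw [Nat.cast_sub (hκn c)]
    field_simp
  have hmaxσ0 : 0 ≤ maxσ := by
    obtain ⟨c, hc⟩ := hLne
    refine le_trans ?_ (Finset.le_sup' (fun c => 2 * (1 - (κ c : ℝ) / (n : ℝ)) * σ c) hc)
    have h1 : (0:ℝ) ≤ 1 - (κ c : ℝ) / (n:ℝ) := by
      rw [← hcoef c]
      positivity
    exact mul_nonneg (mul_nonneg (by norm_num) h1) (hσ0 c)
  rcases eq_or_ne (ω i) (ω j) with heq | hne
  · have hg0 : grad i j sf ω = 0 := grad_eq_zero_of_apply_eq i j sf ω heq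
    have hz : ∀ c ∈ (Finset.univ : Finset (Fin L)), τ c * indIn c i j sf ω
        + ((n - κ c : ℕ) : ℝ) / (n:ℝ) * σ c * indCross c i j sf ω = 0 := by
      intro c _
      unfold indIn indCross
      rw [hg0]
      simp
    rw [Finset.sum_eq_zero hz]
    have : g = 0 := by rw [hgdef, hg0, mul_zero]
    rw [this, mul_zero]
  · rw [Finset.sum_add_distrib]
    -- first sum
    have h1 : ∑ c, τ c * indIn c i j sf ω ≤ ((L:ℝ) - 2) * maxτ * g := by
      have hrw : ∀ c : Fin L, τ c * indIn c i j sf ω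
          = if ω i ≠ c ∧ ω j ≠ c then τ c * g else 0 := by
        intro c
        unfold indIn
        split_ifs <;> simp [hgdef]
      rw [Finset.sum_congr rfl (fun c _ => hrw c), ← Finset.sum_filter]
      have hfilter : Finset.univ.filter (fun c : Fin L => ω i ≠ c ∧ ω j ≠ c)
          = Finset.univ \ {ω i, ω j} := by
        ext c
        simp only [Finset.mem_filter, Finset.mem_univ, true_and, Finset.mem_sdiff,
          Finset.mem_insert, Finset.mem_singleton]
        constructor
        · rintro ⟨ha, hb⟩
          push_neg
          exact ⟨fun h => ha h.symm, fun h => hb h.symm⟩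
        · intro h
          push_neg at h
          exact ⟨fun hh => h.1 hh.symm, fun hh => h.2 hh.symm⟩
      have hcard : (Finset.univ.filter (fun c : Fin L => ω i ≠ c ∧ ω j ≠ c)).card = L - 2 := by
        rw [hfilter, Finset.card_sdiff_of_subset (Finset.subset_univ _)]
        rw [Finset.card_univ, Fintype.card_fin,
          Finset.card_insert_of_notMem (by simp [hne]), Finset.card_singleton]
      calc ∑ c ∈ Finset.univ.filter (fun c : Fin L => ω i ≠ c ∧ ω j ≠ c), τ c * g
          ≤ ∑ _c ∈ Finset.univ.filter (fun c : Fin L => ω i ≠ c ∧ ω j ≠ c), maxτ * g := by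
            apply Finset.sum_le_sum
            intro c _
            exact mul_le_mul_of_nonneg_right (Finset.le_sup' τ (Finset.mem_univ c)) hg
        _ = ((L - 2 : ℕ) : ℝ) * (maxτ * g) := by
            rw [Finset.sum_const, hcard, nsmul_eq_mul]
        _ = ((L:ℝ) - 2) * maxτ * g := by
            rw [Nat.cast_sub hL]
            push_cast
            ring
    -- second sum
    have h2 : ∑ c, ((n - κ c : ℕ) : ℝ) / (n:ℝ) * σ c * indCross c i j sf ω ≤ maxσ * g := by
      have hrw : ∀ c : Fin L, ((n - κ c : ℕ) : ℝ) / (n:ℝ) * σ c * indCross c i j sf ω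
          = if ¬ ((ω i = c) ↔ (ω j = c)) then ((n - κ c : ℕ) : ℝ) / (n:ℝ) * σ c * g else 0 := by
        intro c
        unfold indCross
        rcases Classical.em ((ω i = c) ↔ (ω j = c)) with h | h
        · rw [if_pos h, if_neg (by tauto), mul_zero]
        · rw [if_neg h, if_pos h]
      rw [Finset.sum_congr rfl (fun c _ => hrw c), ← Finset.sum_filter]
      have hfilter : Finset.univ.filter (fun c : Fin L => ¬ ((ω i = c) ↔ (ω j = c)))
          = {ω i, ω j} := by
        ext c
        simp only [Finset.mem_filter, Finset.mem_univ, true_and, Finset.mem_insert,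
          Finset.mem_singleton]
        constructor
        · intro hniff
          by_contra hcon
          push_neg at hcon
          apply hniff
          constructor
          · intro hh; exact absurd hh.symm hcon.1
          · intro hh; exact absurd hh.symm hcon.2
        · rintro (rfl | rfl)
          · intro hiff
            exact hne (hiff.mp rfl).symm
          · intro hiff
            exact hne (hiff.mpr rfl)
      rw [hfilter, Finset.sum_pair hne]
      have hbound : ∀ c : Fin L, ((n - κ c : ℕ) : ℝ) / (n:ℝ) * σ c * g ≤ maxσ / 2 * g := by
        intro c
        apply mul_le_mul_of_nonneg_right _ hg
        have hle := Finset.le_sup' (fun c => 2 * (1 - (κ c : ℝ) / (n : ℝ)) * σ c) (Finset.mem_univ c)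
        rw [hcoef c]
        rw [← hmaxσ] at hle
        linarith
      have := hbound (ω i)
      have := hbound (ω j)
      linarith
    have hfin : ((L:ℝ) - 2) * maxτ * g + maxσ * g
        = (((L:ℝ) - 2) * maxτ + maxσ) * g := by ring
    linarith



/-- recursive log-Sobolev estimate (Proposition: recursion over colors). -/
theorem multislice_recursive_logSobolev
    (L : ℕ) (hL : 2 ≤ L) (κ : Fin L → ℕ) (hκ : ∀ ℓ, 0 < κ ℓ)
    (n : ℕ) (hn : n = ∑ ℓ, κ ℓ)
    (τ σ : Fin L → ℝ) (hτ0 : ∀ ℓ, 0 ≤ τ ℓ) (hσ0 : ∀ ℓ, 0 ≤ σ ℓ)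
    (hτ : ∀ ℓ, ∀ g : (Fin (n - κ ℓ) → Fin (L - 1)) → ℝ, (∀ ω, 0 ≤ g ω) →
      entropy (slice (L - 1) (n - κ ℓ) (removeIdx κ ℓ)) g ≤
        τ ℓ * dirichlet (slice (L - 1) (n - κ ℓ) (removeIdx κ ℓ))
          (fun ω => Real.sqrt (g ω)) (fun ω => Real.sqrt (g ω)))
    (hσ : ∀ ℓ, ∀ g : (Fin n → Fin 2) → ℝ, (∀ ω, 0 ≤ g ω) →
      entropy (slice 2 n ![κ ℓ, n - κ ℓ]) g ≤
        σ ℓ * dirichlet (slice 2 n ![κ ℓ, n - κ ℓ])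
          (fun ω => Real.sqrt (g ω)) (fun ω => Real.sqrt (g ω)))
    (f : (Fin n → Fin L) → ℝ) (hf : ∀ ω, 0 ≤ f ω) :
    ((L : ℝ) - 1) * entropy (slice L n κ) f ≤
      (((L : ℝ) - 2) * (Finset.univ.sup' ⟨⟨0, by omega⟩, Finset.mem_univ _⟩ τ) +
        Finset.univ.sup' ⟨⟨0, by omega⟩, Finset.mem_univ _⟩
          (fun ℓ => 2 * (1 - (κ ℓ : ℝ) / (n : ℝ)) * σ ℓ)) *
        dirichlet (slice L n κ) (fun ω => Real.sqrt (f ω)) (fun ω => Real.sqrt (f ω)) := by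
  classical
  have hLne : (Finset.univ : Finset (Fin L)).Nonempty := ⟨⟨0, by omega⟩, Finset.mem_univ _⟩
  have hκn : ∀ c, κ c ≤ n := fun c => by
    rw [hn]; exact Finset.single_le_sum (fun c _ => Nat.zero_le _) (Finset.mem_univ c)
  have hκlt : ∀ c, κ c < n := by
    intro c
    have h2 : ∃ c' : Fin L, c' ≠ c := by
      rcases eq_or_ne c ⟨0, by omega⟩ with rfl | h
      · exact ⟨⟨1, by omega⟩, by simp [Fin.ext_iff]⟩
      · exact ⟨⟨0, by omega⟩, Ne.symm h⟩
    obtain ⟨c', hc'⟩ := h2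
    have hpair : κ c + κ c' ≤ n := by
      rw [hn, ← Finset.sum_pair (Ne.symm hc')]
      exact Finset.sum_le_sum_of_subset (Finset.subset_univ _)
    have := hκ c'
    omega
  have hn0 : 0 < n := by
    have := hκlt ⟨0, by omega⟩
    omega
  have hwpos : ∀ c, (0:ℝ) < ((n - κ c : ℕ):ℝ) := fun c => by
    exact_mod_cast Nat.sub_pos_of_lt (hκlt c)
  have hnR : (0:ℝ) < (n:ℝ) := by exact_mod_cast hn0
  set sf : (Fin n → Fin L) → ℝ := fun ω => Real.sqrt (f ω) with hsf
  set mτ : ℝ := Finset.univ.sup' hLne τ with hmτ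
  set mσ : ℝ := Finset.univ.sup' hLne (fun c => 2 * (1 - (κ c : ℝ) / (n : ℝ)) * σ c) with hmσ
  set CC : ℝ := ((L:ℝ) - 2) * mτ + mσ with hCC
  have hper := fun c => per_color L n hL κ hκ hn c (τ c) (σ c) (hσ0 c) (hτ c) (hσ c) f hf
  have hsumw : ∑ c, ((n - κ c : ℕ):ℝ) = ((L:ℝ) - 1) * (n:ℝ) := by
    have hc : ∀ c : Fin L, ((n - κ c : ℕ):ℝ) = (n:ℝ) - (κ c:ℝ) := fun c => by
      exact_mod_cast Nat.cast_sub (hκn c)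
    rw [Finset.sum_congr rfl (fun c _ => hc c), Finset.sum_sub_distrib, Finset.sum_const,
      Finset.card_univ, Fintype.card_fin, nsmul_eq_mul]
    have hcast : ∑ c : Fin L, ((κ c : ℕ):ℝ) = (n:ℝ) := by
      rw [hn]
      push_cast
      rfl
    rw [hcast]
    have hL1 : (1:ℝ) ≤ (L:ℝ) := by exact_mod_cast le_trans (by norm_num) hL
    ring
  have main1 : (((L:ℝ) - 1) * (n:ℝ)) * entropy (slice L n κ) f
      ≤ ∑ c, ((n - κ c : ℕ):ℝ) *
          (τ c * ((1 / (2 * ((n - κ c : ℕ) : ℝ))) *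
            ∑ p ∈ Finset.univ.filter (fun p : Fin n × Fin n => p.1 < p.2),
              expect (slice L n κ) (indIn c p.1 p.2 sf))
          + σ c * ((1 / (2 * (n:ℝ))) *
            ∑ p ∈ Finset.univ.filter (fun p : Fin n × Fin n => p.1 < p.2),
              expect (slice L n κ) (indCross c p.1 p.2 sf))) := by
    rw [← hsumw, Finset.sum_mul]
    exact Finset.sum_le_sum (fun c _ =>
      mul_le_mul_of_nonneg_left (hper c) (le_of_lt (hwpos c)))
  have main2 : ∀ c : Fin L, ((n - κ c : ℕ):ℝ) *
      (τ c * ((1 / (2 * ((n - κ c : ℕ) : ℝ))) *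
        ∑ p ∈ Finset.univ.filter (fun p : Fin n × Fin n => p.1 < p.2),
          expect (slice L n κ) (indIn c p.1 p.2 sf))
      + σ c * ((1 / (2 * (n:ℝ))) *
        ∑ p ∈ Finset.univ.filter (fun p : Fin n × Fin n => p.1 < p.2),
          expect (slice L n κ) (indCross c p.1 p.2 sf)))
      = ∑ p ∈ Finset.univ.filter (fun p : Fin n × Fin n => p.1 < p.2),
          (1/2) * expect (slice L n κ) (fun ω => τ c * indIn c p.1 p.2 sf ω
            + ((n - κ c : ℕ):ℝ) / (n:ℝ) * σ c * indCross c p.1 p.2 sf ω) := by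
    intro c
    have hw : ((n - κ c : ℕ):ℝ) ≠ 0 := ne_of_gt (hwpos c)
    have hnne : (n:ℝ) ≠ 0 := ne_of_gt hnR
    have e1 : ∀ p : Fin n × Fin n, expect (slice L n κ) (fun ω => τ c * indIn c p.1 p.2 sf ω
        + ((n - κ c : ℕ):ℝ) / (n:ℝ) * σ c * indCross c p.1 p.2 sf ω)
        = τ c * expect (slice L n κ) (indIn c p.1 p.2 sf)
          + ((n - κ c : ℕ):ℝ) / (n:ℝ) * σ c * expect (slice L n κ) (indCross c p.1 p.2 sf) := by
      intro p
      rw [expect_add (slice L n κ) (fun ω => τ c * indIn c p.1 p.2 sf ω)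
        (fun ω => ((n - κ c : ℕ):ℝ) / (n:ℝ) * σ c * indCross c p.1 p.2 sf ω),
        expect_smul (slice L n κ) (τ c) (indIn c p.1 p.2 sf),
        show (fun ω => ((n - κ c : ℕ):ℝ) / (n:ℝ) * σ c * indCross c p.1 p.2 sf ω)
          = (fun ω => (((n - κ c : ℕ):ℝ) / (n:ℝ) * σ c) * indCross c p.1 p.2 sf ω) from rfl,
        expect_smul (slice L n κ) (((n - κ c : ℕ):ℝ) / (n:ℝ) * σ c) (indCross c p.1 p.2 sf)]
    calc ((n - κ c : ℕ):ℝ) *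
        (τ c * ((1 / (2 * ((n - κ c : ℕ) : ℝ))) *
          ∑ p ∈ Finset.univ.filter (fun p : Fin n × Fin n => p.1 < p.2),
            expect (slice L n κ) (indIn c p.1 p.2 sf))
        + σ c * ((1 / (2 * (n:ℝ))) *
          ∑ p ∈ Finset.univ.filter (fun p : Fin n × Fin n => p.1 < p.2),
            expect (slice L n κ) (indCross c p.1 p.2 sf)))
        = (1/2 * τ c) * (∑ p ∈ Finset.univ.filter (fun p : Fin n × Fin n => p.1 < p.2),
            expect (slice L n κ) (indIn c p.1 p.2 sf))
          + (1/2 * (((n - κ c : ℕ):ℝ) / (n:ℝ) * σ c)) *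
            (∑ p ∈ Finset.univ.filter (fun p : Fin n × Fin n => p.1 < p.2),
              expect (slice L n κ) (indCross c p.1 p.2 sf)) := by
          field_simp
      _ = ∑ p ∈ Finset.univ.filter (fun p : Fin n × Fin n => p.1 < p.2),
            ((1/2 * τ c) * expect (slice L n κ) (indIn c p.1 p.2 sf)
              + (1/2 * (((n - κ c : ℕ):ℝ) / (n:ℝ) * σ c)) *
                expect (slice L n κ) (indCross c p.1 p.2 sf)) := by
          rw [Finset.mul_sum, Finset.mul_sum, ← Finset.sum_add_distrib]
      _ = ∑ p ∈ Finset.univ.filter (fun p : Fin n × Fin n => p.1 < p.2),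
            (1/2) * expect (slice L n κ) (fun ω => τ c * indIn c p.1 p.2 sf ω
              + ((n - κ c : ℕ):ℝ) / (n:ℝ) * σ c * indCross c p.1 p.2 sf ω) := by
          refine Finset.sum_congr rfl fun p _ => ?_
          rw [e1 p]
          ring
  have main3 : ∑ c, ∑ p ∈ Finset.univ.filter (fun p : Fin n × Fin n => p.1 < p.2),
      (1/2) * expect (slice L n κ) (fun ω => τ c * indIn c p.1 p.2 sf ω
        + ((n - κ c : ℕ):ℝ) / (n:ℝ) * σ c * indCross c p.1 p.2 sf ω)
      = ∑ p ∈ Finset.univ.filter (fun p : Fin n × Fin n => p.1 < p.2),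
          (1/2) * expect (slice L n κ) (fun ω => ∑ c, (τ c * indIn c p.1 p.2 sf ω
            + ((n - κ c : ℕ):ℝ) / (n:ℝ) * σ c * indCross c p.1 p.2 sf ω)) := by
    rw [Finset.sum_comm]
    refine Finset.sum_congr rfl fun p _ => ?_
    rw [← Finset.mul_sum]
    congr 1
    rw [expect_sum (slice L n κ) Finset.univ (fun c ω => τ c * indIn c p.1 p.2 sf ω
      + ((n - κ c : ℕ):ℝ) / (n:ℝ) * σ c * indCross c p.1 p.2 sf ω)]
  have main4 : ∑ p ∈ Finset.univ.filter (fun p : Fin n × Fin n => p.1 < p.2),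
      (1/2) * expect (slice L n κ) (fun ω => ∑ c, (τ c * indIn c p.1 p.2 sf ω
        + ((n - κ c : ℕ):ℝ) / (n:ℝ) * σ c * indCross c p.1 p.2 sf ω))
      ≤ ∑ p ∈ Finset.univ.filter (fun p : Fin n × Fin n => p.1 < p.2),
          (1/2) * (CC * expect (slice L n κ)
            (fun ω => grad p.1 p.2 sf ω * grad p.1 p.2 sf ω)) := by
    apply Finset.sum_le_sum
    intro p _
    apply mul_le_mul_of_nonneg_left _ (by norm_num : (0:ℝ) ≤ 1/2)
    rw [← expect_smul (slice L n κ) CC (fun ω => grad p.1 p.2 sf ω * grad p.1 p.2 sf ω)]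
    apply expect_le
    intro ω _
    exact pointwise_combine L n hL hn0 κ hκn τ σ hτ0 hσ0 hLne p.1 p.2 sf ω
  have main5 : ∑ p ∈ Finset.univ.filter (fun p : Fin n × Fin n => p.1 < p.2),
      (1/2) * (CC * expect (slice L n κ)
        (fun ω => grad p.1 p.2 sf ω * grad p.1 p.2 sf ω))
      = (CC * dirichlet (slice L n κ) sf sf) * (n:ℝ) := by
    unfold dirichlet
    have hc : ∀ p ∈ Finset.univ.filter (fun p : Fin n × Fin n => p.1 < p.2),
        (1/2 : ℝ) * (CC * expect (slice L n κ)
          (fun ω => grad p.1 p.2 sf ω * grad p.1 p.2 sf ω))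
        = (CC/2) * expect (slice L n κ)
            (fun ω => grad p.1 p.2 sf ω * grad p.1 p.2 sf ω) := by
      intro p _
      ring
    rw [Finset.sum_congr rfl hc, ← Finset.mul_sum]
    have hnne : (n:ℝ) ≠ 0 := ne_of_gt hnR
    field_simp
  have hineq : (((L:ℝ) - 1) * entropy (slice L n κ) f) * (n:ℝ)
      ≤ (CC * dirichlet (slice L n κ) sf sf) * (n:ℝ) := by
    calc (((L:ℝ) - 1) * entropy (slice L n κ) f) * (n:ℝ)
        = (((L:ℝ) - 1) * (n:ℝ)) * entropy (slice L n κ) f := by ring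
      _ ≤ _ := main1
      _ = ∑ c, ∑ p ∈ Finset.univ.filter (fun p : Fin n × Fin n => p.1 < p.2),
            (1/2) * expect (slice L n κ) (fun ω => τ c * indIn c p.1 p.2 sf ω
              + ((n - κ c : ℕ):ℝ) / (n:ℝ) * σ c * indCross c p.1 p.2 sf ω) :=
          Finset.sum_congr rfl (fun c _ => main2 c)
      _ = _ := main3
      _ ≤ _ := main4
      _ = _ := main5
  exact le_of_mul_le_mul_right hineq hnR


end Multislice
end

section
/- Log-Sobolev inequality for the colored exclusion process (lower bound on regular graphs): let κ = (κ_1,…,κ_L) with L ≥ 2, let H be a simple d-regular graph on vertex set [n] with d ≥ 1, and define G_{ij} = 1/d if {i,j} is an edge of H and G_{ij} = 0 otherwise. If τ ∈ ℝ satisfies Ent_κ(f) ≤ τ·𝔈^G_κ(√f, √f) for all f : Ω_κ → [0,∞), then τ ≥ log(n/κ_min). -/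
open Finset

namespace Multislice

section Aux

variable {L n : ℕ} {κ : Fin L → ℕ}

private lemma card_filter_get {α : Type*} [DecidableEq α] (l : List α) (a : α) :
    (Finset.univ.filter fun i : Fin l.length => l.get i = a).card = l.count a := by
  classical
  have h : ((Finset.univ : Finset (Fin l.length)).val.map l.get) = (l : Multiset α) := by
    have h0 : (Finset.univ : Finset (Fin l.length)).val = ↑(List.finRange l.length) := rfl
    rw [h0, Multiset.map_coe]
    exact congrArg _ (List.map_get_finRange l)
  have h2 : l.count a
      = Multiset.count a ((Finset.univ : Finset (Fin l.length)).val.map l.get) := by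
    rw [h]; simp [Multiset.coe_count]
  rw [h2, Multiset.count_map]
  have h3 : (Finset.univ.filter fun i : Fin l.length => l.get i = a).val
      = (Finset.univ : Finset (Fin l.length)).val.filter (fun i => a = l.get i) := by
    rw [Finset.filter_val]
    apply Multiset.filter_congr
    intro x _
    exact eq_comm
  rw [Finset.card_def, h3]

private lemma card_filter_comp {β γ α : Type*} [Fintype β] [Fintype γ] [DecidableEq α]
    (e : β ≃ γ) (g : γ → α) (a : α) :
    (Finset.univ.filter fun i : β => g (e i) = a).card
      = (Finset.univ.filter fun j : γ => g j = a).card := by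
  classical
  apply Finset.card_bij (fun i _ => e i)
  · intro x hx
    simp only [Finset.mem_filter, Finset.mem_univ, true_and] at hx ⊢
    exact hx
  · intro x _ y _ h
    exact e.injective h
  · intro y hy
    simp only [Finset.mem_filter, Finset.mem_univ, true_and] at hy
    exact ⟨e.symm y, by simp [Finset.mem_filter, hy], by simp⟩

private lemma comp_perm_mem_slice (σ : Equiv.Perm (Fin n)) {ω : Fin n → Fin L}
    (h : ω ∈ slice L n κ) : ω ∘ σ ∈ slice L n κ := by
  classical
  simp only [slice, Finset.mem_filter, Finset.mem_univ, true_and] at h ⊢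
  intro ℓ
  rw [← h ℓ]
  exact card_filter_comp σ ω ℓ

private lemma slice_nonempty_s19 (hn : n = ∑ ℓ, κ ℓ) : (slice L n κ).Nonempty := by
  classical
  set l : List (Fin L) := (List.finRange L).flatMap fun ℓ => List.replicate (κ ℓ) ℓ with hl
  have hlen : l.length = n := by
    rw [hn, hl, List.length_flatMap, Fin.sum_univ_def]
    congr 1
    apply List.map_congr_left
    intro a _
    simp
  refine ⟨fun i => l.get (Fin.cast hlen.symm i), ?_⟩
  simp only [slice, Finset.mem_filter, Finset.mem_univ, true_and]
  intro ℓ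
  have := card_filter_comp (β := Fin n) (finCongr hlen.symm) l.get ℓ
  rw [show (Finset.univ.filter fun i : Fin n => l.get (Fin.cast hlen.symm i) = ℓ)
      = (Finset.univ.filter fun i : Fin n => l.get ((finCongr hlen.symm) i) = ℓ) from rfl,
    this, card_filter_get]
  rw [hl, List.count_flatMap]
  have h2 : (List.count ℓ ∘ fun m => List.replicate (κ m) m)
      = fun m => if m = ℓ then κ m else 0 := by
    funext m; simp [List.count_replicate]
  rw [h2, ← Fin.sum_univ_def]
  simp

private lemma sum_comp_perm (σ : Equiv.Perm (Fin n)) (g : (Fin n → Fin L) → ℝ) :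
    ∑ ω ∈ slice L n κ, g (ω ∘ σ) = ∑ ω ∈ slice L n κ, g ω := by
  apply Finset.sum_nbij' (fun ω => ω ∘ σ) (fun ω => ω ∘ σ.symm)
  · intro ω hω; exact comp_perm_mem_slice σ hω
  · intro ω hω; exact comp_perm_mem_slice σ.symm hω
  · intro ω _; funext i; simp
  · intro ω _; funext i; simp
  · intro ω _; rfl

private lemma expect_comp_perm (σ : Equiv.Perm (Fin n)) (g : (Fin n → Fin L) → ℝ) :
    expect (slice L n κ) (fun ω => g (ω ∘ σ)) = expect (slice L n κ) g := by
  unfold expect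
  rw [sum_comp_perm]

private lemma count_coord (ℓ₀ : Fin L) (i : Fin n) :
    ((slice L n κ).filter fun ω => ω i = ℓ₀).card * n = κ ℓ₀ * (slice L n κ).card := by
  classical
  have hconst : ∀ j : Fin n, ((slice L n κ).filter fun ω => ω j = ℓ₀).card
      = ((slice L n κ).filter fun ω => ω i = ℓ₀).card := by
    intro j
    apply Finset.card_bij (fun ω _ => ω ∘ Equiv.swap i j)
    · intro ω hω
      simp only [Finset.mem_filter] at hω ⊢
      refine ⟨comp_perm_mem_slice _ hω.1, ?_⟩
      simpa using hω.2
    · intro ω hω η hη h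
      funext k
      have := congrFun h (Equiv.swap i j k)
      simpa using this
    · intro η hη
      simp only [Finset.mem_filter] at hη
      refine ⟨η ∘ Equiv.swap i j, ?_, ?_⟩
      · simp only [Finset.mem_filter]
        refine ⟨comp_perm_mem_slice _ hη.1, ?_⟩
        simpa [Equiv.swap_apply_right] using hη.2
      · funext k; simp
  have hsum2 : ∑ j : Fin n, ((slice L n κ).filter fun ω => ω j = ℓ₀).card
      = κ ℓ₀ * (slice L n κ).card := by
    have h1 : ∀ j : Fin n, ((slice L n κ).filter fun ω => ω j = ℓ₀).card
        = ∑ ω ∈ slice L n κ, if ω j = ℓ₀ then 1 else 0 := fun j => Finset.card_filter _ _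
    calc ∑ j : Fin n, ((slice L n κ).filter fun ω => ω j = ℓ₀).card
        = ∑ j : Fin n, ∑ ω ∈ slice L n κ, if ω j = ℓ₀ then 1 else 0 :=
          Finset.sum_congr rfl fun j _ => h1 j
      _ = ∑ ω ∈ slice L n κ, ∑ j : Fin n, if ω j = ℓ₀ then 1 else 0 := Finset.sum_comm
      _ = ∑ ω ∈ slice L n κ, (Finset.univ.filter fun j => ω j = ℓ₀).card :=
          Finset.sum_congr rfl fun ω _ => (Finset.card_filter _ _).symm
      _ = ∑ _ω ∈ slice L n κ, κ ℓ₀ := by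
          apply Finset.sum_congr rfl
          intro ω hω
          simp only [slice, Finset.mem_filter, Finset.mem_univ, true_and] at hω
          exact hω ℓ₀
      _ = κ ℓ₀ * (slice L n κ).card := by rw [Finset.sum_const, smul_eq_mul, mul_comm]
  have hsum1 : ∑ j : Fin n, ((slice L n κ).filter fun ω => ω j = ℓ₀).card
      = n * ((slice L n κ).filter fun ω => ω i = ℓ₀).card := by
    rw [Finset.sum_congr rfl fun j _ => hconst j, Finset.sum_const, Finset.card_univ,
      Fintype.card_fin, smul_eq_mul]
  rw [Nat.mul_comm, ← hsum1, hsum2]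

end Aux

/-- lower bound on the log-Sobolev constant of the colored
exclusion process on a `d`-regular graph. -/
theorem colored_exclusion_logSobolev_lower
    (L : ℕ) (hL : 2 ≤ L) (κ : Fin L → ℕ) (hκ : ∀ ℓ, 0 < κ ℓ)
    (n : ℕ) (hn : n = ∑ ℓ, κ ℓ)
    (κmin : ℕ) (hmin : ∀ ℓ, κmin ≤ κ ℓ) (hmem : ∃ ℓ, κ ℓ = κmin)
    (d : ℕ) (hd : 1 ≤ d)
    (H : SimpleGraph (Fin n)) [DecidableRel H.Adj] (hreg : H.IsRegularOfDegree d)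
    (τ : ℝ)
    (hτ : ∀ f : (Fin n → Fin L) → ℝ, (∀ ω, 0 ≤ f ω) →
      entropy (slice L n κ) f ≤
        τ * wDirichlet (fun i j => if H.Adj i j then (1 : ℝ) / (d : ℝ) else 0)
          (slice L n κ)
          (fun ω => Real.sqrt (f ω)) (fun ω => Real.sqrt (f ω))) :
    Real.log ((n : ℝ) / (κmin : ℝ)) ≤ τ := by
  classical
  obtain ⟨ℓ₀, hℓ₀⟩ := hmem
  have hκmin : 0 < κmin := hℓ₀ ▸ hκ ℓ₀
  obtain ⟨ℓ₁, hℓ₁⟩ : ∃ ℓ₁ : Fin L, ℓ₁ ≠ ℓ₀ := by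
    have h1 : 1 < Fintype.card (Fin L) := by simpa using (show 1 < L by omega)
    exact Fintype.exists_ne_of_one_lt_card h1 ℓ₀
  have hnk : κmin + 1 ≤ n := by
    have h1 : κ ℓ₀ + κ ℓ₁ ≤ ∑ ℓ, κ ℓ := by
      rw [← Finset.add_sum_erase _ _ (Finset.mem_univ ℓ₀)]
      have h2 : κ ℓ₁ ≤ ∑ ℓ ∈ Finset.univ.erase ℓ₀, κ ℓ :=
        Finset.single_le_sum (fun _ _ => Nat.zero_le _)
          (Finset.mem_erase.mpr ⟨hℓ₁, Finset.mem_univ _⟩)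
      omega
    have h3 := hκ ℓ₁
    omega
  set Ω := slice L n κ with hΩdef
  have hΩne : Ω.Nonempty := slice_nonempty_s19 hn
  have hcard : 0 < Ω.card := Finset.card_pos.mpr hΩne
  have hcardR : (0 : ℝ) < Ω.card := by exact_mod_cast hcard
  have hnR : (0 : ℝ) < n := by
    have : 0 < n := by omega
    exact_mod_cast this
  have hκR : (0 : ℝ) < κmin := by exact_mod_cast hκmin
  set i₀ : Fin n := ⟨0, by omega⟩ with hi₀def
  set f : (Fin n → Fin L) → ℝ := fun ω => if ω i₀ = ℓ₀ then 1 else 0 with hfdef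
  have hf0 : ∀ ω, 0 ≤ f ω := by
    intro ω; rw [hfdef]; dsimp; split <;> norm_num
  have hsqrt : (fun ω => Real.sqrt (f ω)) = f := by
    funext ω; rw [hfdef]; dsimp; split <;> simp
  set p : ℝ := (κmin : ℝ) / n with hpdef
  have hp : 0 < p := div_pos hκR hnR
  have hEf : expect Ω f = p := by
    have hc := count_coord (κ := κ) ℓ₀ i₀
    rw [hℓ₀] at hc
    rw [hfdef, hpdef]
    unfold expect
    rw [Finset.sum_boole, div_eq_div_iff hcardR.ne' hnR.ne']
    exact_mod_cast hc
  have hlogp : Real.log p = -Real.log ((n : ℝ) / κmin) := by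
    rw [hpdef, Real.log_div hκR.ne' hnR.ne', Real.log_div hnR.ne' hκR.ne']
    ring
  have hEnt : entropy Ω f = p * Real.log ((n : ℝ) / κmin) := by
    unfold entropy
    have hflog : (fun ω => f ω * Real.log (f ω)) = fun _ => (0 : ℝ) := by
      funext ω; rw [hfdef]; dsimp; split <;> simp
    rw [hflog, hEf, hlogp]
    have : expect Ω (fun _ => (0 : ℝ)) = 0 := by unfold expect; simp
    rw [this]
    ring
  -- expectation helpers
  have hEnn : ∀ g : (Fin n → Fin L) → ℝ, (∀ ω, 0 ≤ g ω) → 0 ≤ expect Ω g := by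
    intro g hg
    unfold expect
    apply div_nonneg (Finset.sum_nonneg fun ω _ => hg ω)
    positivity
  have hEmono : ∀ g h : (Fin n → Fin L) → ℝ, (∀ ω, g ω ≤ h ω) → expect Ω g ≤ expect Ω h := by
    intro g h hgh
    unfold expect
    exact div_le_div_of_nonneg_right (Finset.sum_le_sum fun ω _ => hgh ω) hcardR.le
  have hEadd : ∀ g h : (Fin n → Fin L) → ℝ,
      expect Ω (fun ω => g ω + h ω) = expect Ω g + expect Ω h := by
    intro g h
    unfold expect
    rw [Finset.sum_add_distrib, add_div]
  -- pointwise bound on the squared gradient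
  have hgradsq : ∀ (i j : Fin n) (ω : Fin n → Fin L),
      grad i j f ω * grad i j f ω ≤ f (ω ∘ Equiv.swap i j) + f ω := by
    intro i j ω
    unfold grad
    rw [hfdef]
    simp only [Function.comp_apply]
    by_cases h1 : ω (Equiv.swap i j i₀) = ℓ₀ <;> by_cases h2 : ω i₀ = ℓ₀ <;>
      simp [h1, h2] <;> norm_num
  have hEpair : ∀ i j : Fin n,
      expect Ω (fun ω => grad i j f ω * grad i j f ω) ≤ 2 * p := by
    intro i j
    have h1 : expect Ω (fun ω => f (ω ∘ Equiv.swap i j) + f ω) = 2 * p := by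
      rw [hEadd]
      have h2 : expect Ω (fun ω => f (ω ∘ Equiv.swap i j)) = p := by
        rw [hΩdef] at hEf ⊢
        rw [expect_comp_perm (Equiv.swap i j) f, hEf]
      rw [h2, hEf]
      ring
    calc expect Ω (fun ω => grad i j f ω * grad i j f ω)
        ≤ expect Ω (fun ω => f (ω ∘ Equiv.swap i j) + f ω) :=
          hEmono _ _ (fun ω => hgradsq i j ω)
      _ = 2 * p := h1
  have hgrad0 : ∀ i j : Fin n, i ≠ i₀ → j ≠ i₀ → ∀ ω, grad i j f ω = 0 := by
    intro i j hi hj ω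
    unfold grad
    have hsw : Equiv.swap i j i₀ = i₀ := Equiv.swap_apply_of_ne_of_ne (Ne.symm hi) (Ne.symm hj)
    rw [hfdef]
    simp [hsw]
  -- the weighted Dirichlet form
  set G : Fin n → Fin n → ℝ := fun i j => if H.Adj i j then (1 : ℝ) / (d : ℝ) else 0 with hGdef
  have hGnn : ∀ i j, 0 ≤ G i j := by
    intro i j; rw [hGdef]; dsimp; split <;> positivity
  set S : Finset (Fin n × Fin n) := Finset.univ.filter (fun q : Fin n × Fin n => q.1 < q.2)
    with hSdef
  set T : Finset (Fin n × Fin n) :=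
    S.filter (fun q => H.Adj q.1 q.2 ∧ (q.1 = i₀ ∨ q.2 = i₀)) with hTdef
  set E : Fin n × Fin n → ℝ :=
    fun q => expect Ω (fun ω => grad q.1 q.2 f ω * grad q.1 q.2 f ω) with hEdef
  have hEnn' : ∀ q, 0 ≤ E q := by
    intro q
    exact hEnn _ (fun ω => mul_self_nonneg _)
  have hdR : (0 : ℝ) < d := by exact_mod_cast hd
  have hsum_eq : ∑ q ∈ S, G q.1 q.2 * E q = ∑ q ∈ T, G q.1 q.2 * E q := by
    symm
    apply Finset.sum_subset (Finset.filter_subset _ _)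
    intro q hqS hqT
    have hqT' : ¬(H.Adj q.1 q.2 ∧ (q.1 = i₀ ∨ q.2 = i₀)) := by
      intro hcon
      exact hqT (Finset.mem_filter.mpr ⟨hqS, hcon⟩)
    by_cases hadj : H.Adj q.1 q.2
    · have hor : ¬(q.1 = i₀ ∨ q.2 = i₀) := fun h => hqT' ⟨hadj, h⟩
      obtain ⟨h1, h2⟩ := not_or.mp hor
      have hE0 : E q = 0 := by
        rw [hEdef]
        have hz : (fun ω => grad q.1 q.2 f ω * grad q.1 q.2 f ω) = fun _ => (0 : ℝ) := by
          funext ω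
          rw [hgrad0 q.1 q.2 h1 h2 ω]
          ring
        dsimp only
        rw [hz]
        unfold expect
        simp
      rw [hE0, mul_zero]
    · have : G q.1 q.2 = 0 := by rw [hGdef]; exact if_neg hadj
      rw [this, zero_mul]
  have hTcard : T.card ≤ d := by
    have := hreg i₀
    rw [← SimpleGraph.card_neighborFinset_eq_degree] at this
    rw [← this]
    apply Finset.card_le_card_of_injOn (fun q => if q.1 = i₀ then q.2 else q.1)
    · intro q hq
      simp only [Finset.mem_coe]
      rw [hTdef] at hq
      simp only [Finset.mem_coe, Finset.mem_filter, hSdef, Finset.mem_univ, true_and] at hq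
      obtain ⟨hlt, hadj, hor⟩ := hq
      by_cases h1 : q.1 = i₀
      · rw [if_pos h1]
        rw [SimpleGraph.mem_neighborFinset]
        exact h1 ▸ hadj
      · rw [if_neg h1]
        have h2 : q.2 = i₀ := by tauto
        rw [SimpleGraph.mem_neighborFinset]
        exact (h2 ▸ hadj).symm
    · intro q hq r hr hqr
      simp only [Finset.coe_filter, Set.mem_setOf_eq, hTdef, hSdef, Finset.mem_coe,
        Finset.mem_filter, Finset.mem_univ, true_and] at hq hr
      obtain ⟨hqlt, _, hqor⟩ := hq
      obtain ⟨hrlt, _, hror⟩ := hr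
      dsimp at hqr
      by_cases h1 : q.1 = i₀ <;> by_cases h2 : r.1 = i₀
      · rw [if_pos h1, if_pos h2] at hqr
        exact Prod.ext (h1.trans h2.symm) hqr
      · rw [if_pos h1, if_neg h2] at hqr
        have h3 : r.2 = i₀ := by tauto
        exfalso
        rw [h1] at hqlt
        rw [← h3] at hqlt
        rw [hqr] at hqlt
        exact absurd (hrlt.trans hqlt) (lt_irrefl _)
      · rw [if_neg h1, if_pos h2] at hqr
        have h3 : q.2 = i₀ := by tauto
        exfalso
        rw [h2] at hrlt
        rw [← h3] at hrlt
        rw [← hqr] at hrlt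
        exact absurd (hqlt.trans hrlt) (lt_irrefl _)
      · rw [if_neg h1, if_neg h2] at hqr
        have h3 : q.2 = i₀ := by tauto
        have h4 : r.2 = i₀ := by tauto
        exact Prod.ext hqr (h3.trans h4.symm)
  have hW_le : wDirichlet G Ω f f ≤ p := by
    have hstep : ∀ q ∈ T, G q.1 q.2 * E q ≤ (1 / (d : ℝ)) * (2 * p) := by
      intro q hq
      have hadj : H.Adj q.1 q.2 := by
        rw [hTdef] at hq
        simp only [Finset.mem_filter] at hq
        tauto
      have hG : G q.1 q.2 = 1 / (d : ℝ) := by rw [hGdef]; exact if_pos hadj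
      rw [hG]
      exact mul_le_mul_of_nonneg_left (hEpair q.1 q.2) (by positivity)
    calc wDirichlet G Ω f f = (1 / 2) * ∑ q ∈ S, G q.1 q.2 * E q := rfl
      _ = (1 / 2) * ∑ q ∈ T, G q.1 q.2 * E q := by rw [hsum_eq]
      _ ≤ (1 / 2) * ∑ q ∈ T, (1 / (d : ℝ)) * (2 * p) := by
          apply mul_le_mul_of_nonneg_left (Finset.sum_le_sum hstep) (by norm_num)
      _ = (1 / 2) * ((T.card : ℝ) * ((1 / (d : ℝ)) * (2 * p))) := by
          rw [Finset.sum_const, nsmul_eq_mul]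
      _ ≤ (1 / 2) * ((d : ℝ) * ((1 / (d : ℝ)) * (2 * p))) := by
          apply mul_le_mul_of_nonneg_left _ (by norm_num)
          apply mul_le_mul_of_nonneg_right _ (by positivity)
          exact_mod_cast hTcard
      _ = p := by field_simp
  have hW_nn : 0 ≤ wDirichlet G Ω f f := by
    rw [show wDirichlet G Ω f f = (1 / 2) * ∑ q ∈ S, G q.1 q.2 * E q from rfl]
    apply mul_nonneg (by norm_num)
    exact Finset.sum_nonneg fun q _ => mul_nonneg (hGnn _ _) (hEnn' q)
  have key0 := hτ f hf0
  rw [hsqrt, hEnt] at key0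
  have key : p * Real.log ((n : ℝ) / κmin) ≤ τ * wDirichlet G Ω f f := key0
  have hlog : 0 < Real.log ((n : ℝ) / κmin) := by
    apply Real.log_pos
    rw [lt_div_iff₀ hκR]
    have : (κmin : ℝ) < n := by exact_mod_cast (by omega : κmin < n)
    linarith
  have hτpos : 0 < τ := by
    rcases le_or_gt τ 0 with h | h
    · exfalso
      have h2 : τ * wDirichlet G Ω f f ≤ 0 := mul_nonpos_iff.mpr (Or.inr ⟨h, hW_nn⟩)
      nlinarith [mul_pos hp hlog]
    · exact h
  have h3 : p * Real.log ((n : ℝ) / κmin) ≤ τ * p :=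
    le_trans key (mul_le_mul_of_nonneg_left hW_le hτpos.le)
  have h4 : p * Real.log ((n : ℝ) / κmin) ≤ p * τ := by linarith
  exact le_of_mul_le_mul_left h4 hp

end Multislice
end
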